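/- arXiv:1106.0811 — 5 statements merged into one kernel-verified Lean document; each statement's English description precedes it below -/
import Mathlib

section
/- For any finite simple graph G with nonempty vertex set, M(G × K₂) = M(G), where G × K₂ denotes the bipartite double cover of G. -/
-- `lamMax G`: the largest eigenvalue of the adjacency matrix of `G`.
open Classical in
noncomputable def lamMax {V : Type*} [Fintype V] (G : SimpleGraph V) : ℝ :=
  sSup (spectrum ℝ (G.adjMatrix ℝ))

-- `eXY G X Y = e(X,Y)`: the number of ordered pairs `(x,y) ∈ X × Y` with `x` adjacent to `y`.
open Classical in
noncomputable def eXY {V : Type*} (G : SimpleGraph V) (X Y : Finset V) : ℕ :=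
  ((X ×ˢ Y).filter fun p => G.Adj p.1 p.2).card

/-- `M(G)`: the maximum of `e(X,Y)/√(|X||Y|)` over nonempty `X, Y ⊆ V`. -/
noncomputable def MG {V : Type*} (G : SimpleGraph V) : ℝ :=
  sSup {r : ℝ | ∃ X Y : Finset V, X.Nonempty ∧ Y.Nonempty ∧
    r = (eXY G X Y : ℝ) / Real.sqrt ((X.card : ℝ) * (Y.card : ℝ))}

/-- The bipartite double cover `G × K₂` of `G`: vertices `(v, i)` with `v ∈ V`,
`i ∈ {0,1}`, and `(u,i)` adjacent to `(v,j)` iff `u ~ v` in `G` and `i ≠ j`. -/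
def doubleCover {V : Type*} (G : SimpleGraph V) : SimpleGraph (V × Bool) where
  Adj a b := G.Adj a.1 b.1 ∧ a.2 ≠ b.2
  symm := ⟨fun _ _ h => ⟨h.1.symm, Ne.symm h.2⟩⟩
  loopless := ⟨fun _ h => h.2 rfl⟩

open Classical in
lemma eXY_eq_sum {V : Type*} [Fintype V] (G : SimpleGraph V) (X Y : Finset V) :
    (eXY G X Y : ℕ) = ∑ x : V, ∑ y : V, if x ∈ X ∧ y ∈ Y ∧ G.Adj x y then 1 else 0 := by
  classical
  rw [eXY, Finset.card_filter, Finset.sum_product]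
  rw [← Finset.sum_subset (Finset.subset_univ X)
    (by intro x _ hx; simp [hx])]
  refine Finset.sum_congr rfl fun x hx => ?_
  rw [← Finset.sum_subset (Finset.subset_univ Y) (by intro y _ hy; simp [hy])]
  refine Finset.sum_congr rfl fun y hy => ?_
  by_cases h : x ∈ X <;> by_cases h2 : y ∈ Y <;> simp_all

open Classical in
noncomputable def bslice {V : Type*} (b : Bool) (X : Finset (V × Bool)) : Finset V :=
  (X.filter (fun p => p.2 = b)).image Prod.fst

lemma mem_slice {V : Type*} {b : Bool} {X : Finset (V × Bool)} {x : V} :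
    x ∈ bslice b X ↔ (x, b) ∈ X := by
  classical
  simp only [bslice, Finset.mem_image, Finset.mem_filter]
  constructor
  · rintro ⟨⟨x', b'⟩, ⟨hx, hb⟩, rfl⟩; cases hb; exact hx
  · intro h; exact ⟨(x, b), ⟨h, rfl⟩, rfl⟩

lemma card_slice {V : Type*} (X : Finset (V × Bool)) :
    (bslice false X).card + (bslice true X).card = X.card := by
  classical
  have h : ∀ b : Bool, (bslice b X).card = (X.filter (fun p => p.2 = b)).card := by
    intro b
    refine Finset.card_image_of_injOn ?_
    rintro ⟨x, b1⟩ h1 ⟨y, b2⟩ h2 h3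
    simp only [Finset.mem_coe, Finset.mem_filter] at h1 h2
    simp only at h3
    rw [h3, h1.2, h2.2]
  rw [h, h]
  rw [show (Finset.filter (fun p : V × Bool => p.2 = true) X) =
      (Finset.filter (fun p : V × Bool => ¬ p.2 = false) X) from
    Finset.filter_congr (by intro p _; simp)]
  exact Finset.card_filter_add_card_filter_not (p := fun p : V × Bool => p.2 = false)

lemma doubleCover_adj {V : Type*} (G : SimpleGraph V) (a b : V × Bool) :
    (doubleCover G).Adj a b ↔ G.Adj a.1 b.1 ∧ a.2 ≠ b.2 := Iff.rfl

lemma eXY_dc {V : Type*} [Fintype V] (G : SimpleGraph V) (X Y : Finset (V × Bool)) :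
    eXY (doubleCover G) X Y
      = eXY G (bslice false X) (bslice true Y) + eXY G (bslice true X) (bslice false Y) := by
  classical
  rw [eXY_eq_sum, eXY_eq_sum, eXY_eq_sum]
  simp only [Fintype.sum_prod_type, Fintype.sum_bool, ← Finset.sum_add_distrib]
  refine Finset.sum_congr rfl fun x _ => ?_
  refine Finset.sum_congr rfl fun y _ => ?_
  by_cases h1 : (x, true) ∈ X <;> by_cases h2 : (x, false) ∈ X <;>
    by_cases h3 : (y, true) ∈ Y <;> by_cases h4 : (y, false) ∈ Y <;>
    by_cases h5 : G.Adj x y <;> simp_all [doubleCover_adj, mem_slice]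

lemma eXY_le_mul {V : Type*} (G : SimpleGraph V) (X Y : Finset V) :
    eXY G X Y ≤ X.card * Y.card := by
  classical
  calc eXY G X Y ≤ (X ×ˢ Y).card := Finset.card_filter_le _ _
  _ = X.card * Y.card := Finset.card_product X Y

lemma eXY_empty_left {V : Type*} (G : SimpleGraph V) (Y : Finset V) :
    eXY G ∅ Y = 0 := by
  have := eXY_le_mul G ∅ Y; simpa using this

lemma eXY_empty_right {V : Type*} (G : SimpleGraph V) (X : Finset V) :
    eXY G X ∅ = 0 := by
  have := eXY_le_mul G X ∅; simpa using this

lemma bddAbove_MGset {V : Type*} [Fintype V] (G : SimpleGraph V) :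
    BddAbove {r : ℝ | ∃ X Y : Finset V, X.Nonempty ∧ Y.Nonempty ∧
      r = (eXY G X Y : ℝ) / Real.sqrt ((X.card : ℝ) * (Y.card : ℝ))} := by
  refine ⟨(Fintype.card V : ℝ), ?_⟩
  rintro r ⟨X, Y, hX, hY, rfl⟩
  have ha1 : (1 : ℝ) ≤ (X.card : ℝ) := by exact_mod_cast Finset.card_pos.mpr hX
  have hb1 : (1 : ℝ) ≤ (Y.card : ℝ) := by exact_mod_cast Finset.card_pos.mpr hY
  have han : (X.card : ℝ) ≤ Fintype.card V := by exact_mod_cast Finset.card_le_univ X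
  have hbn : (Y.card : ℝ) ≤ Fintype.card V := by exact_mod_cast Finset.card_le_univ Y
  set a : ℝ := (X.card : ℝ)
  set b : ℝ := (Y.card : ℝ)
  have hsq : Real.sqrt (a * b) ^ 2 = a * b := Real.sq_sqrt (by positivity)
  have hspos : 0 < Real.sqrt (a * b) := Real.sqrt_pos.mpr (by nlinarith)
  have hsn : Real.sqrt (a * b) ≤ Fintype.card V := by
    rw [show ((Fintype.card V : ℝ)) = Real.sqrt ((Fintype.card V : ℝ) * (Fintype.card V)) from
      (Real.sqrt_mul_self (by positivity)).symm]
    exact Real.sqrt_le_sqrt (by nlinarith)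
  have he : (eXY G X Y : ℝ) ≤ a * b := by simp only [a, b]; exact_mod_cast eXY_le_mul G X Y
  rw [div_le_iff₀ hspos]
  nlinarith

lemma le_MG {V : Type*} [Fintype V] (G : SimpleGraph V) {X Y : Finset V}
    (hX : X.Nonempty) (hY : Y.Nonempty) :
    (eXY G X Y : ℝ) / Real.sqrt ((X.card : ℝ) * (Y.card : ℝ)) ≤ MG G :=
  le_csSup (bddAbove_MGset G) ⟨X, Y, hX, hY, rfl⟩

lemma MG_nonneg {V : Type*} [Fintype V] [Nonempty V] (G : SimpleGraph V) : 0 ≤ MG G := by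
  obtain ⟨v⟩ := ‹Nonempty V›
  refine le_trans ?_ (le_MG G (X := {v}) (Y := {v}) ⟨v, by simp⟩ ⟨v, by simp⟩)
  positivity

lemma eXY_le_MG_mul {V : Type*} [Fintype V] [Nonempty V] (G : SimpleGraph V) (X Y : Finset V) :
    (eXY G X Y : ℝ) ≤ MG G * Real.sqrt ((X.card : ℝ) * (Y.card : ℝ)) := by
  rcases X.eq_empty_or_nonempty with rfl | hX
  · simp [eXY_empty_left, mul_nonneg (MG_nonneg G) (Real.sqrt_nonneg _)]
  rcases Y.eq_empty_or_nonempty with rfl | hY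
  · simp [eXY_empty_right, mul_nonneg (MG_nonneg G) (Real.sqrt_nonneg _)]
  have hspos : 0 < Real.sqrt ((X.card : ℝ) * (Y.card : ℝ)) := by
    apply Real.sqrt_pos.mpr
    have := Finset.card_pos.mpr hX
    have := Finset.card_pos.mpr hY
    positivity
  have := le_MG G hX hY
  rw [div_le_iff₀ hspos] at this
  linarith

lemma sqrt_cauchy (a b c d : ℝ) (ha : 0 ≤ a) (hb : 0 ≤ b) (hc : 0 ≤ c) (hd : 0 ≤ d) :
    Real.sqrt (a * d) + Real.sqrt (b * c) ≤ Real.sqrt ((a + b) * (c + d)) := by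
  have key : Real.sqrt (a*d) * Real.sqrt (b*c) ≤ (a*c + b*d)/2 := by
    rw [← Real.sqrt_mul (by positivity)]
    rw [show a*d*(b*c) = (a*c)*(b*d) by ring]
    rw [Real.sqrt_mul (by positivity)]
    nlinarith [Real.sq_sqrt (mul_nonneg ha hc), Real.sq_sqrt (mul_nonneg hb hd),
      sq_nonneg (Real.sqrt (a*c) - Real.sqrt (b*d)), Real.sqrt_nonneg (a*c), Real.sqrt_nonneg (b*d)]
  have h1 := Real.sq_sqrt (mul_nonneg ha hd)
  have h2 := Real.sq_sqrt (mul_nonneg hb hc)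
  have n1 := Real.sqrt_nonneg (a*d)
  have n2 := Real.sqrt_nonneg (b*c)
  rw [show Real.sqrt (a*d) + Real.sqrt (b*c)
      = Real.sqrt ((Real.sqrt (a*d) + Real.sqrt (b*c))^2) from (Real.sqrt_sq (by positivity)).symm]
  apply Real.sqrt_le_sqrt
  nlinarith

lemma bslice_prod_same {V : Type*} (b : Bool) (X : Finset V) :
    bslice b (X ×ˢ {b}) = X := by
  ext x; rw [mem_slice]; simp

lemma bslice_prod_other {V : Type*} {b c : Bool} (h : b ≠ c) (X : Finset V) :
    bslice b (X ×ˢ {c}) = ∅ := by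
  ext x; rw [mem_slice]; simp [Ne.symm h]

set_option maxHeartbeats 1000000 in
/-- `M(G × K₂) = M(G)`. -/
theorem statement4 {V : Type*} [Fintype V] [Nonempty V] (G : SimpleGraph V) :
    MG (doubleCover G) = MG G := by
  classical
  apply le_antisymm
  · -- MG (doubleCover G) ≤ MG G
    apply csSup_le
    · obtain ⟨v⟩ := ‹Nonempty V›
      exact ⟨_, ⟨{(v, false)}, {(v, false)}, Finset.singleton_nonempty _, Finset.singleton_nonempty _, rfl⟩⟩
    rintro r ⟨X, Y, hX, hY, rfl⟩
    have hxpos : (0:ℝ) < X.card := by exact_mod_cast Finset.card_pos.mpr hX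
    have hypos : (0:ℝ) < Y.card := by exact_mod_cast Finset.card_pos.mpr hY
    have hspos : 0 < Real.sqrt ((X.card : ℝ) * (Y.card : ℝ)) :=
      Real.sqrt_pos.mpr (by positivity)
    rw [div_le_iff₀ hspos]
    have he : (eXY (doubleCover G) X Y : ℝ)
        = (eXY G (bslice false X) (bslice true Y) : ℝ)
          + (eXY G (bslice true X) (bslice false Y) : ℝ) := by
      exact_mod_cast congrArg (Nat.cast : ℕ → ℝ) (eXY_dc G X Y)
    have h1 := eXY_le_MG_mul G (bslice false X) (bslice true Y)
    have h2 := eXY_le_MG_mul G (bslice true X) (bslice false Y)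
    have hC := sqrt_cauchy ((bslice false X).card : ℝ) ((bslice true X).card : ℝ)
      ((bslice false Y).card : ℝ) ((bslice true Y).card : ℝ)
      (by positivity) (by positivity) (by positivity) (by positivity)
    have hx : ((bslice false X).card : ℝ) + ((bslice true X).card : ℝ) = X.card := by
      exact_mod_cast card_slice X
    have hy : ((bslice false Y).card : ℝ) + ((bslice true Y).card : ℝ) = Y.card := by
      exact_mod_cast card_slice Y
    rw [hx, hy] at hC
    have hM := MG_nonneg G
    calc (eXY (doubleCover G) X Y : ℝ)
        ≤ MG G * (Real.sqrt (((bslice false X).card : ℝ) * ((bslice true Y).card : ℝ))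
            + Real.sqrt (((bslice true X).card : ℝ) * ((bslice false Y).card : ℝ))) := by
          rw [he, mul_add]; exact add_le_add h1 h2
      _ ≤ MG G * Real.sqrt ((X.card : ℝ) * (Y.card : ℝ)) :=
          mul_le_mul_of_nonneg_left hC hM
  · -- MG G ≤ MG (doubleCover G)
    apply csSup_le
    · obtain ⟨v⟩ := ‹Nonempty V›
      exact ⟨_, ⟨{v}, {v}, Finset.singleton_nonempty _, Finset.singleton_nonempty _, rfl⟩⟩
    rintro r ⟨X, Y, hX, hY, rfl⟩
    have hkey : eXY (doubleCover G) (X ×ˢ {false}) (Y ×ˢ {true}) = eXY G X Y := by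
      rw [eXY_dc, bslice_prod_same, bslice_prod_same,
        bslice_prod_other (by simp) X, bslice_prod_other (by simp) Y,
        eXY_empty_left, add_zero]
    have hcX : (X ×ˢ ({false} : Finset Bool)).card = X.card := by simp
    have hcY : (Y ×ˢ ({true} : Finset Bool)).card = Y.card := by simp
    have : (eXY G X Y : ℝ) / Real.sqrt ((X.card : ℝ) * (Y.card : ℝ))
        = (eXY (doubleCover G) (X ×ˢ {false}) (Y ×ˢ {true}) : ℝ) /
          Real.sqrt (((X ×ˢ ({false} : Finset Bool)).card : ℝ)
            * ((Y ×ˢ ({true} : Finset Bool)).card : ℝ)) := by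
      rw [hkey, hcX, hcY]
    rw [this]
    exact le_MG (doubleCover G) (hX.product (Finset.singleton_nonempty _))
      (hY.product (Finset.singleton_nonempty _))
end

section
/- Let G be a finite simple bipartite graph with nonempty partite sets U and W, let d(v) denote the degree of a vertex v, and let Δ_U := max_{u∈U} d(u) and Δ_W := max_{w∈W} d(w). Then max{ √((Σ_{u∈U} d(u)²)/|W|), √((Σ_{w∈W} d(w)²)/|U|) } ≤ λmax(G) ≤ √(Δ_U·Δ_W); consequently, ((Σ_{u∈U} d(u)²)/|U|)^{1/4} · ((Σ_{w∈W} d(w)²)/|W|)^{1/4} ≤ λmax(G). -/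
section AuxSpectral

set_option linter.unusedSectionVars false

open Matrix Finset

open Matrix Finset

section Aux

variable {V : Type*} [Fintype V]

lemma exists_eigenvec [DecidableEq V] (A : Matrix V V ℝ) {μ : ℝ}
    (hμ : μ ∈ spectrum ℝ A) : ∃ x : V → ℝ, x ≠ 0 ∧ A *ᵥ x = μ • x := by
  rw [← AlgEquiv.spectrum_eq (Matrix.toLinAlgEquiv' (R := ℝ) (n := V)) A] at hμ
  have h := Module.End.hasEigenvalue_iff_mem_spectrum.mpr hμ
  obtain ⟨x, hx⟩ := h.exists_hasEigenvector
  refine ⟨x, hx.2, ?_⟩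
  have := hx.apply_eq_smul
  simpa [Matrix.toLinAlgEquiv'_apply, Matrix.toLin'_apply] using this

lemma eig_le_rowsum (A : Matrix V V ℝ)
    (h0 : ∀ i j, 0 ≤ A i j) {c : ℝ} (hc : ∀ i, ∑ j, A i j ≤ c)
    {μ : ℝ} {x : V → ℝ} (hx : x ≠ 0) (hAx : A *ᵥ x = μ • x) : |μ| ≤ c := by
  have hne : (Finset.univ : Finset V).Nonempty := by
    rcases Function.ne_iff.mp hx with ⟨v, -⟩
    exact ⟨v, mem_univ v⟩
  obtain ⟨i, -, hi⟩ := Finset.exists_max_image Finset.univ (fun v => |x v|) hne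
  have hxi : 0 < |x i| := by
    rcases Function.ne_iff.mp hx with ⟨v, hv⟩
    exact lt_of_lt_of_le (abs_pos.mpr hv) (hi v (mem_univ v))
  have key : |μ| * |x i| ≤ c * |x i| := by
    have h1 : |μ * x i| = |(A *ᵥ x) i| := by rw [hAx]; simp [mul_comm]
    calc |μ| * |x i| = |(A *ᵥ x) i| := by rw [← abs_mul, h1]
    _ ≤ ∑ j, |A i j * x j| := by
        rw [Matrix.mulVec, dotProduct]; exact Finset.abs_sum_le_sum_abs _ _
    _ = ∑ j, A i j * |x j| := by
        refine Finset.sum_congr rfl fun j _ => ?_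
        rw [abs_mul, abs_of_nonneg (h0 i j)]
    _ ≤ ∑ j, A i j * |x i| :=
        Finset.sum_le_sum fun j _ => mul_le_mul_of_nonneg_left (hi j (mem_univ j)) (h0 i j)
    _ = (∑ j, A i j) * |x i| := by rw [Finset.sum_mul]
    _ ≤ c * |x i| := mul_le_mul_of_nonneg_right (hc i) (le_of_lt hxi)
  exact le_of_mul_le_mul_right key hxi

lemma rayleigh_le_sSup [DecidableEq V] (A : Matrix V V ℝ)
    (hA : A.IsHermitian) (hbdd : BddAbove (spectrum ℝ A)) (x : V → ℝ) (hx : x ≠ 0) :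
    ∑ v, (A *ᵥ x) v * x v ≤ sSup (spectrum ℝ A) * ∑ v, x v ^ 2 := by
  classical
  set E := EuclideanSpace ℝ V with hE
  set y : E := (WithLp.equiv 2 (V → ℝ)).symm x with hy
  have hyne : y ≠ 0 := by
    intro h
    apply hx
    have := congrArg (WithLp.equiv 2 (V → ℝ)) h
    simpa [hy] using this
  haveI : Nontrivial E := nontrivial_of_ne y 0 hyne
  set T : E →ₗ[ℝ] E := Matrix.toEuclideanLin A with hTdef
  have hT : T.IsSymmetric := Matrix.isHermitian_iff_isSymmetric.mp hA
  have hEig := hT.hasEigenvalue_iSup_of_finiteDimensional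
  set μ : ℝ := ⨆ z : { z : E // z ≠ 0 }, RCLike.re (inner ℝ (T z) (z : E) : ℝ) / ‖(z : E)‖ ^ 2
    with hμdef
  have hmem : μ ∈ spectrum ℝ A := by
    rw [← Matrix.spectrum_toEuclideanLin (𝕜 := ℝ) (A := A)]
    exact Module.End.hasEigenvalue_iff_mem_spectrum.mp hEig
  set Tc := LinearMap.toContinuousLinearMap T with hTc
  have hTcT : ∀ z : E, T z = Tc z := fun z => rfl
  have hb : BddAbove (Set.range fun z : { z : E // z ≠ 0 } =>
      RCLike.re (inner ℝ (T z) (z : E) : ℝ) / ‖(z : E)‖ ^ 2) := by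
    refine ⟨‖Tc‖, ?_⟩
    rintro r ⟨⟨z, hz⟩, rfl⟩
    have hnz : 0 < ‖z‖ := norm_pos_iff.mpr hz
    have h1 : (inner ℝ (T z) z : ℝ) ≤ ‖T z‖ * ‖z‖ := real_inner_le_norm _ _
    have h2 : ‖T z‖ ≤ ‖Tc‖ * ‖z‖ := by rw [hTcT]; exact Tc.le_opNorm z
    simp only [RCLike.re_to_real]
    rw [div_le_iff₀ (by positivity)]
    calc (inner ℝ (T z) z : ℝ) ≤ ‖T z‖ * ‖z‖ := h1
    _ ≤ (‖Tc‖ * ‖z‖) * ‖z‖ := by nlinarith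
    _ = ‖Tc‖ * ‖z‖ ^ 2 := by ring
  have hray : RCLike.re (inner ℝ (T y) (y : E) : ℝ) / ‖y‖ ^ 2 ≤ μ :=
    le_ciSup hb (⟨y, hyne⟩ : { z : E // z ≠ 0 })
  have hle : μ ≤ sSup (spectrum ℝ A) := le_csSup hbdd hmem
  have hinner : (inner ℝ (T y) (y : E) : ℝ) = ∑ v, (A *ᵥ x) v * x v := by
    rw [PiLp.inner_apply]
    refine Finset.sum_congr rfl fun v _ => ?_
    have hTy : T y = (WithLp.equiv 2 (V → ℝ)).symm (A *ᵥ x) := by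
      rw [hTdef, hy]; rfl
    rw [hTy]
    simp [RCLike.inner_apply, hy, WithLp.equiv_symm_apply, mul_comm]
  have hnorm : ‖y‖ ^ 2 = ∑ v, x v ^ 2 := by
    rw [← real_inner_self_eq_norm_sq, PiLp.inner_apply]
    refine Finset.sum_congr rfl fun v _ => by
      simp [hy, sq, RCLike.inner_apply]
  have hN : 0 < ∑ v, x v ^ 2 := by
    obtain ⟨v, hv⟩ := Function.ne_iff.mp hx
    exact Finset.sum_pos' (fun i _ => sq_nonneg _) ⟨v, mem_univ v, pow_two_pos_of_ne_zero hv⟩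
  have hfin := hray.trans hle
  rw [RCLike.re_to_real, hinner, hnorm, div_le_iff₀ hN] at hfin
  linarith [hfin]

end Aux

section Graph

variable {V : Type*} [Fintype V] [DecidableEq V] (G : SimpleGraph V) [DecidableRel G.Adj]

lemma adj_herm : (G.adjMatrix ℝ).IsHermitian := by
  unfold Matrix.IsHermitian
  ext i j
  simp [Matrix.conjTranspose_apply, SimpleGraph.adjMatrix_apply, G.adj_comm]

lemma adj_row_sum (k : V) : ∑ j, G.adjMatrix ℝ k j = (G.degree k : ℝ) := by
  simp [SimpleGraph.adjMatrix_apply, SimpleGraph.neighborFinset_eq_filter, Finset.sum_boole,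
    SimpleGraph.degree]

variable {G}

lemma spec_le_sqrt {U W : Finset V} (hU : U.Nonempty) (hW : W.Nonempty)
    (hdisj : Disjoint U W) (hcover : ∀ v : V, v ∈ U ∨ v ∈ W)
    (hbip : ∀ a b, G.Adj a b → (a ∈ U ∧ b ∈ W) ∨ (a ∈ W ∧ b ∈ U))
    {μ : ℝ} (hμ : μ ∈ spectrum ℝ (G.adjMatrix ℝ)) :
    μ ≤ Real.sqrt ((U.sup' hU fun u => (G.degree u : ℝ)) *
      (W.sup' hW fun w => (G.degree w : ℝ))) := by
  classical
  set A := G.adjMatrix ℝ with hAdef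
  set DU := U.sup' hU fun u => (G.degree u : ℝ) with hDU
  set DW := W.sup' hW fun w => (G.degree w : ℝ) with hDW
  have hDU0 : 0 ≤ DU :=
    le_trans (Nat.cast_nonneg _) (Finset.le_sup' (fun u => (G.degree u : ℝ)) hU.choose_spec)
  have hDW0 : 0 ≤ DW :=
    le_trans (Nat.cast_nonneg _) (Finset.le_sup' (fun w => (G.degree w : ℝ)) hW.choose_spec)
  obtain ⟨x, hx, hAx⟩ := exists_eigenvec A hμ
  have h2 : (A * A) *ᵥ x = (μ ^ 2) • x := by
    rw [← Matrix.mulVec_mulVec, hAx, Matrix.mulVec_smul, hAx, smul_smul, sq]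
  have h0 : ∀ i j, 0 ≤ (A * A) i j := by
    intro i j
    rw [Matrix.mul_apply]
    refine Finset.sum_nonneg fun k _ => mul_nonneg ?_ ?_ <;>
      simp [hAdef, SimpleGraph.adjMatrix_apply] <;> positivity
  have hNU : ∀ v ∈ U, ∀ k ∈ G.neighborFinset v, k ∈ W := by
    intro v hv k hk
    rw [SimpleGraph.mem_neighborFinset] at hk
    rcases hbip v k hk with ⟨-, h⟩ | ⟨h, -⟩
    · exact h
    · exact absurd h (Finset.disjoint_left.mp hdisj hv)
  have hNW : ∀ v ∈ W, ∀ k ∈ G.neighborFinset v, k ∈ U := by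
    intro v hv k hk
    rw [SimpleGraph.mem_neighborFinset] at hk
    rcases hbip v k hk with ⟨h, -⟩ | ⟨-, h⟩
    · exact absurd hv (Finset.disjoint_left.mp hdisj h)
    · exact h
  have hrow : ∀ i, ∑ j, (A * A) i j ≤ DU * DW := by
    intro i
    have hsum : ∑ j, (A * A) i j = ∑ k ∈ G.neighborFinset i, (G.degree k : ℝ) := by
      calc ∑ j, (A * A) i j = ∑ j, ∑ k ∈ G.neighborFinset i, A k j := by
            refine Finset.sum_congr rfl fun j _ => ?_
            rw [hAdef, SimpleGraph.adjMatrix_mul_apply]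
      _ = ∑ k ∈ G.neighborFinset i, ∑ j, A k j := Finset.sum_comm
      _ = ∑ k ∈ G.neighborFinset i, (G.degree k : ℝ) :=
            Finset.sum_congr rfl fun k _ => adj_row_sum G k
    rw [hsum]
    rcases hcover i with hi | hi
    · calc ∑ k ∈ G.neighborFinset i, (G.degree k : ℝ)
          ≤ ∑ _k ∈ G.neighborFinset i, DW :=
            Finset.sum_le_sum fun k hk => Finset.le_sup' (fun w => (G.degree w : ℝ)) (hNU i hi k hk)
      _ = (G.degree i : ℝ) * DW := by
            rw [Finset.sum_const, SimpleGraph.card_neighborFinset_eq_degree, nsmul_eq_mul]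
      _ ≤ DU * DW := mul_le_mul_of_nonneg_right (Finset.le_sup' (fun u => (G.degree u : ℝ)) hi) hDW0
    · calc ∑ k ∈ G.neighborFinset i, (G.degree k : ℝ)
          ≤ ∑ _k ∈ G.neighborFinset i, DU :=
            Finset.sum_le_sum fun k hk => Finset.le_sup' (fun u => (G.degree u : ℝ)) (hNW i hi k hk)
      _ = (G.degree i : ℝ) * DU := by
            rw [Finset.sum_const, SimpleGraph.card_neighborFinset_eq_degree, nsmul_eq_mul]
      _ ≤ DW * DU := mul_le_mul_of_nonneg_right (Finset.le_sup' (fun w => (G.degree w : ℝ)) hi) hDU0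
      _ = DU * DW := mul_comm _ _
  have habs := eig_le_rowsum (A * A) h0 hrow hx h2
  have hsq : μ ^ 2 ≤ DU * DW := by
    calc μ ^ 2 = |μ ^ 2| := (abs_of_nonneg (sq_nonneg μ)).symm
    _ ≤ DU * DW := habs
  calc μ ≤ |μ| := le_abs_self μ
  _ = Real.sqrt (μ ^ 2) := (Real.sqrt_sq_eq_abs μ).symm
  _ ≤ Real.sqrt (DU * DW) := Real.sqrt_le_sqrt hsq

end Graph

lemma sqrt_lower_le {V : Type*} [Fintype V] [DecidableEq V] {G : SimpleGraph V}
    [DecidableRel G.Adj] {U W : Finset V} (hU : U.Nonempty) (hW : W.Nonempty)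
    (hdisj : Disjoint U W) (hcover : ∀ v : V, v ∈ U ∨ v ∈ W)
    (hbip : ∀ a b, G.Adj a b → (a ∈ U ∧ b ∈ W) ∨ (a ∈ W ∧ b ∈ U))
    (hbdd : BddAbove (spectrum ℝ (G.adjMatrix ℝ))) :
    Real.sqrt ((∑ u ∈ U, (G.degree u : ℝ) ^ 2) / (W.card : ℝ)) ≤
      sSup (spectrum ℝ (G.adjMatrix ℝ)) := by
  classical
  set A := G.adjMatrix ℝ with hAdef
  set L := sSup (spectrum ℝ A) with hL
  set S := ∑ u ∈ U, (G.degree u : ℝ) ^ 2 with hS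
  have hS0 : 0 ≤ S := Finset.sum_nonneg fun u _ => sq_nonneg _
  -- L is nonnegative
  have hL0 : 0 ≤ L := by
    obtain ⟨w0, hw0⟩ := hW
    set x : V → ℝ := Pi.single w0 1 with hxdef
    have hx : x ≠ 0 := by
      intro h
      have := congrFun h w0
      simp [hxdef] at this
    have key := rayleigh_le_sSup A (adj_herm G) hbdd x hx
    have hQ : ∑ v, (A *ᵥ x) v * x v = 0 := by
      rw [Finset.sum_eq_single w0]
      · have : (A *ᵥ x) w0 = 0 := by
          rw [hAdef, SimpleGraph.adjMatrix_mulVec_apply]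
          refine Finset.sum_eq_zero fun k hk => ?_
          rw [SimpleGraph.mem_neighborFinset] at hk
          have : k ≠ w0 := fun h => G.irrefl (h ▸ hk)
          simp [hxdef, Pi.single_apply, this]
        rw [this, zero_mul]
      · intro v _ hv
        simp [hxdef, Pi.single_apply, hv]
      · intro h
        exact absurd (mem_univ w0) h
    have hNx : ∑ v, x v ^ 2 = 1 := by
      rw [Finset.sum_eq_single w0]
      · simp [hxdef]
      · intro v _ hv
        simp [hxdef, Pi.single_apply, hv]
      · intro h
        exact absurd (mem_univ w0) h
    rw [hQ, hNx, mul_one] at key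
    exact key
  rcases eq_or_lt_of_le hS0 with hSz | hSpos
  · rw [← hSz]
    simp [hL0]
  -- main case
  have hWpos : (0 : ℝ) < W.card := by
    exact_mod_cast Finset.card_pos.mpr hW
  set t : ℝ := Real.sqrt (W.card : ℝ) / Real.sqrt S with ht
  set d : V → ℝ := fun v => (G.degree v : ℝ) with hd
  set x : V → ℝ := fun v => if v ∈ U then t * d v else 1 with hxdef
  have hxW : ∀ v ∈ W, x v = 1 := fun v hv => by
    rw [hxdef]; simp [Finset.disjoint_right.mp hdisj hv]
  have hx : x ≠ 0 := by
    obtain ⟨w0, hw0⟩ := hW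
    intro h
    have := congrFun h w0
    rw [hxW w0 hw0] at this
    simp at this
  have hNU : ∀ v ∈ U, ∀ k ∈ G.neighborFinset v, k ∈ W := by
    intro v hv k hk
    rw [SimpleGraph.mem_neighborFinset] at hk
    rcases hbip v k hk with ⟨-, h⟩ | ⟨h, -⟩
    · exact h
    · exact absurd h (Finset.disjoint_left.mp hdisj hv)
  have hNW : ∀ v ∈ W, ∀ k ∈ G.neighborFinset v, k ∈ U := by
    intro v hv k hk
    rw [SimpleGraph.mem_neighborFinset] at hk
    rcases hbip v k hk with ⟨h, -⟩ | ⟨-, h⟩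
    · exact absurd hv (Finset.disjoint_left.mp hdisj h)
    · exact h
  have hUW : U ∪ W = Finset.univ :=
    Finset.eq_univ_iff_forall.mpr fun v => Finset.mem_union.mpr (hcover v)
  have hsplit : ∀ f : V → ℝ, ∑ v, f v = ∑ v ∈ U, f v + ∑ v ∈ W, f v := by
    intro f
    rw [← Finset.sum_union hdisj, hUW]
  -- the quadratic form
  have hQU : ∀ v ∈ U, (A *ᵥ x) v * x v = t * d v ^ 2 := by
    intro v hv
    have hmv : (A *ᵥ x) v = d v := by
      rw [hAdef, SimpleGraph.adjMatrix_mulVec_apply]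
      rw [Finset.sum_congr rfl fun k hk => hxW k (hNU v hv k hk)]
      rw [Finset.sum_const, SimpleGraph.card_neighborFinset_eq_degree]
      simp [hd]
    rw [hmv, hxdef]
    simp only [if_pos hv]
    ring
  have hQW : ∀ v ∈ W, (A *ᵥ x) v * x v = ∑ k ∈ G.neighborFinset v, t * d k := by
    intro v hv
    rw [hxW v hv, mul_one, hAdef, SimpleGraph.adjMatrix_mulVec_apply]
    refine Finset.sum_congr rfl fun k hk => ?_
    rw [hxdef]
    simp [if_pos (hNW v hv k hk)]
  have hdouble : ∑ v ∈ W, ∑ k ∈ G.neighborFinset v, t * d k = t * S := by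
    have hfilter : ∀ k, (W.filter fun v => G.Adj v k).card =
        if k ∈ U then G.degree k else 0 := by
      intro k
      by_cases hk : k ∈ U
      · rw [if_pos hk]
        have : (W.filter fun v => G.Adj v k) = G.neighborFinset k := by
          ext v
          simp only [Finset.mem_filter, SimpleGraph.mem_neighborFinset]
          constructor
          · rintro ⟨-, h⟩; exact h.symm
          · intro h
            exact ⟨hNU k hk v (by rwa [SimpleGraph.mem_neighborFinset]), h.symm⟩
        rw [this, SimpleGraph.card_neighborFinset_eq_degree]
      · rw [if_neg hk]
        rw [Finset.card_eq_zero]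
        rw [Finset.filter_eq_empty_iff]
        intro v hv hadj
        rcases hbip v k hadj with ⟨h1, -⟩ | ⟨-, h2⟩
        · exact Finset.disjoint_left.mp hdisj h1 hv
        · exact hk h2
    calc ∑ v ∈ W, ∑ k ∈ G.neighborFinset v, t * d k
        = ∑ v ∈ W, ∑ k, if G.Adj v k then t * d k else 0 := by
          refine Finset.sum_congr rfl fun v _ => ?_
          rw [SimpleGraph.neighborFinset_eq_filter, Finset.sum_filter]
    _ = ∑ k, ∑ v ∈ W, if G.Adj v k then t * d k else 0 := Finset.sum_comm
    _ = ∑ k, ((W.filter fun v => G.Adj v k).card : ℝ) * (t * d k) := by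
          refine Finset.sum_congr rfl fun k _ => ?_
          rw [← Finset.sum_filter, Finset.sum_const, nsmul_eq_mul]
    _ = ∑ k, (if k ∈ U then (d k : ℝ) else 0) * (t * d k) := by
          refine Finset.sum_congr rfl fun k _ => ?_
          rw [hfilter k]
          by_cases hk : k ∈ U <;> simp [hk, hd]
    _ = ∑ k ∈ U, d k * (t * d k) := by
          simp only [ite_mul, zero_mul]
          rw [← Finset.sum_filter]
          congr 1
          ext k
          simp
    _ = t * S := by
          rw [hS, Finset.mul_sum]
          refine Finset.sum_congr rfl fun k _ => ?_
          rw [hd]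
          ring
  have hQ : ∑ v, (A *ᵥ x) v * x v = 2 * t * S := by
    rw [hsplit, Finset.sum_congr rfl hQU, Finset.sum_congr rfl hQW, hdouble]
    rw [← Finset.mul_sum, ← hS]
    ring
  have hNx : ∑ v, x v ^ 2 = t ^ 2 * S + W.card := by
    rw [hsplit]
    have h1 : ∑ v ∈ U, x v ^ 2 = t ^ 2 * S := by
      rw [hS, Finset.mul_sum]
      refine Finset.sum_congr rfl fun v hv => ?_
      rw [hxdef]
      simp only [if_pos hv]
      rw [hd]
      ring
    have h2 : ∑ v ∈ W, x v ^ 2 = W.card := by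
      rw [Finset.sum_congr rfl fun v hv => by rw [hxW v hv]]
      simp
    rw [h1, h2]
  have key := rayleigh_le_sSup A (adj_herm G) hbdd x hx
  rw [hQ, hNx, ← hL] at key
  -- arithmetic
  set a := Real.sqrt S with ha
  set b := Real.sqrt (W.card : ℝ) with hb
  have ha0 : 0 < a := Real.sqrt_pos.mpr hSpos
  have hb0 : 0 < b := Real.sqrt_pos.mpr hWpos
  have haS : a ^ 2 = S := Real.sq_sqrt hS0
  have hbW : b ^ 2 = (W.card : ℝ) := Real.sq_sqrt (le_of_lt hWpos)
  have htS : t * S = b * a := by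
    rw [ht, ← haS]
    field_simp
  have ht2S : t ^ 2 * S = (W.card : ℝ) := by
    rw [ht, div_pow, haS, ← hbW]
    field_simp
  have h2t : 2 * t * S = 2 * (b * a) := by rw [mul_assoc, htS]
  rw [h2t, ht2S] at key
  have hgoal : Real.sqrt (S / (W.card : ℝ)) = a / b := by
    rw [Real.sqrt_div hS0, ← ha, ← hb]
  rw [hgoal, div_le_iff₀ hb0]
  nlinarith [key, ha0, hb0, hbW]

end AuxSpectral

/-- For a bipartite graph with partite sets `U`, `W`:
`max{√(Σ_{u∈U} d(u)²/|W|), √(Σ_{w∈W} d(w)²/|U|)} ≤ λmax(G) ≤ √(Δ_U·Δ_W)`, and consequently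
`(Σ_{u∈U} d(u)²/|U|)^{1/4} · (Σ_{w∈W} d(w)²/|W|)^{1/4} ≤ λmax(G)`. -/
theorem statement5 {V : Type*} [Fintype V] (G : SimpleGraph V) [DecidableRel G.Adj]
    (U W : Finset V) (hU : U.Nonempty) (hW : W.Nonempty)
    (hdisj : Disjoint U W) (hcover : ∀ v : V, v ∈ U ∨ v ∈ W)
    (hbip : ∀ a b, G.Adj a b → (a ∈ U ∧ b ∈ W) ∨ (a ∈ W ∧ b ∈ U)) :
    max (Real.sqrt ((∑ u ∈ U, (G.degree u : ℝ) ^ 2) / (W.card : ℝ)))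
        (Real.sqrt ((∑ w ∈ W, (G.degree w : ℝ) ^ 2) / (U.card : ℝ))) ≤ lamMax G ∧
    lamMax G ≤ Real.sqrt ((U.sup' hU fun u => (G.degree u : ℝ)) *
        (W.sup' hW fun w => (G.degree w : ℝ))) ∧
    ((∑ u ∈ U, (G.degree u : ℝ) ^ 2) / (U.card : ℝ)) ^ ((1 : ℝ) / 4) *
      ((∑ w ∈ W, (G.degree w : ℝ) ^ 2) / (W.card : ℝ)) ^ ((1 : ℝ) / 4) ≤ lamMax G := by
  classical
  have hlam : lamMax G = sSup (spectrum ℝ (G.adjMatrix ℝ)) := by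
    unfold lamMax
    congr!
  have hdisj' : Disjoint W U := hdisj.symm
  have hcover' : ∀ v : V, v ∈ W ∨ v ∈ U := fun v => (hcover v).symm
  have hbip' : ∀ a b, G.Adj a b → (a ∈ W ∧ b ∈ U) ∨ (a ∈ U ∧ b ∈ W) :=
    fun a b h => (hbip a b h).symm
  -- upper bound for every spectrum element
  have hspec : ∀ μ ∈ spectrum ℝ (G.adjMatrix ℝ),
      μ ≤ Real.sqrt ((U.sup' hU fun u => (G.degree u : ℝ)) *
        (W.sup' hW fun w => (G.degree w : ℝ))) :=
    fun μ hμ => spec_le_sqrt hU hW hdisj hcover hbip hμ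
  have hbdd : BddAbove (spectrum ℝ (G.adjMatrix ℝ)) := ⟨_, fun μ hμ => hspec μ hμ⟩
  have hupper : lamMax G ≤ Real.sqrt ((U.sup' hU fun u => (G.degree u : ℝ)) *
      (W.sup' hW fun w => (G.degree w : ℝ))) := by
    rw [hlam]
    exact Real.sSup_le hspec (Real.sqrt_nonneg _)
  have hlow1 : Real.sqrt ((∑ u ∈ U, (G.degree u : ℝ) ^ 2) / (W.card : ℝ)) ≤ lamMax G := by
    rw [hlam]
    exact sqrt_lower_le hU hW hdisj hcover hbip hbdd
  have hlow2 : Real.sqrt ((∑ w ∈ W, (G.degree w : ℝ) ^ 2) / (U.card : ℝ)) ≤ lamMax G := by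
    rw [hlam]
    exact sqrt_lower_le hW hU hdisj' hcover' hbip' hbdd
  refine ⟨max_le hlow1 hlow2, hupper, ?_⟩
  -- part 3
  set SU := ∑ u ∈ U, (G.degree u : ℝ) ^ 2 with hSU
  set SW := ∑ w ∈ W, (G.degree w : ℝ) ^ 2 with hSW
  have hSU0 : 0 ≤ SU := Finset.sum_nonneg fun u _ => sq_nonneg _
  have hSW0 : 0 ≤ SW := Finset.sum_nonneg fun w _ => sq_nonneg _
  have hcU : (0 : ℝ) < U.card := by exact_mod_cast Finset.card_pos.mpr hU
  have hcW : (0 : ℝ) < W.card := by exact_mod_cast Finset.card_pos.mpr hW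
  set M := max (Real.sqrt (SU / (W.card : ℝ))) (Real.sqrt (SW / (U.card : ℝ))) with hM
  have hM0 : 0 ≤ M := le_trans (Real.sqrt_nonneg _) (le_max_left _ _)
  have hML : M ≤ lamMax G := max_le hlow1 hlow2
  set P := (SU / (U.card : ℝ)) ^ ((1 : ℝ) / 4) * (SW / (W.card : ℝ)) ^ ((1 : ℝ) / 4) with hP
  have hq1 : (0 : ℝ) ≤ SU / (U.card : ℝ) := by positivity
  have hq2 : (0 : ℝ) ≤ SW / (W.card : ℝ) := by positivity
  have hP0 : 0 ≤ P := by positivity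
  have hquart : ∀ x : ℝ, 0 ≤ x → (x ^ ((1 : ℝ) / 4)) ^ 2 = Real.sqrt x := by
    intro x hx
    rw [← Real.rpow_natCast (x ^ ((1 : ℝ) / 4)) 2, ← Real.rpow_mul hx]
    norm_num
    rw [Real.sqrt_eq_rpow]
  have hPsq : P ^ 2 = Real.sqrt (SU / (W.card : ℝ)) * Real.sqrt (SW / (U.card : ℝ)) := by
    rw [hP, mul_pow, hquart _ hq1, hquart _ hq2]
    rw [← Real.sqrt_mul hq1, ← Real.sqrt_mul (by positivity : (0:ℝ) ≤ SU / (W.card : ℝ))]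
    rw [div_mul_div_comm, div_mul_div_comm, mul_comm (U.card : ℝ) (W.card : ℝ)]
  have hPM : P ≤ M := by
    have hsq : P ^ 2 ≤ M ^ 2 := by
      rw [hPsq]
      calc Real.sqrt (SU / (W.card : ℝ)) * Real.sqrt (SW / (U.card : ℝ))
          ≤ M * M :=
            mul_le_mul (le_max_left _ _) (le_max_right _ _) (Real.sqrt_nonneg _) hM0
      _ = M ^ 2 := (sq M).symm
    calc P = Real.sqrt (P ^ 2) := (Real.sqrt_sq hP0).symm
    _ ≤ Real.sqrt (M ^ 2) := Real.sqrt_le_sqrt hsq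
    _ = M := Real.sqrt_sq hM0
  exact hPM.trans hML
end

section
/- Let G be a finite simple bipartite graph with nonempty partite sets U and W, having at least one edge, and let n := min{|U|, |W|}. Then M(G) ≤ λmax(G) ≤ ((1/2)·log n + 2)·M(G). -/
section Aux

open Matrix Finset

set_option linter.unusedSectionVars false

variable {V : Type*} [Fintype V] [DecidableEq V]

lemma spec_diag (d : V → ℝ) :
    spectrum ℝ (Matrix.diagonal d) = Set.range d := by
  ext μ
  rw [spectrum.mem_iff]
  have key : ∀ i : V, (algebraMap ℝ (V → ℝ)) μ i - d i = μ - d i := fun i => rfl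
  constructor
  · intro hμ
    by_contra h
    apply hμ
    rw [Matrix.isUnit_iff_isUnit_det, isUnit_iff_ne_zero, Matrix.algebraMap_eq_diagonal,
      Matrix.diagonal_sub, Matrix.det_diagonal]
    refine Finset.prod_ne_zero_iff.2 fun i _ => ?_
    rw [key i]
    intro hc
    exact h ⟨i, by linarith [sub_eq_zero.mp hc]⟩
  · rintro ⟨i, rfl⟩
    rw [Matrix.isUnit_iff_isUnit_det, isUnit_iff_ne_zero, Matrix.algebraMap_eq_diagonal,
      Matrix.diagonal_sub, Matrix.det_diagonal, not_ne_iff]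
    apply Finset.prod_eq_zero (Finset.mem_univ i)
    simp

lemma spec_eq_range {A : Matrix V V ℝ} (hA : A.IsHermitian) :
    spectrum ℝ A = Set.range hA.eigenvalues := by
  conv_lhs => rw [hA.spectral_theorem, Unitary.conjStarAlgAut_apply]
  have hu : ((Unitary.toUnits hA.eigenvectorUnitary : (Matrix V V ℝ)ˣ) : Matrix V V ℝ) = (hA.eigenvectorUnitary : Matrix V V ℝ) := rfl
  rw [← hu]
  have hu' : star (((Unitary.toUnits hA.eigenvectorUnitary) : (Matrix V V ℝ)ˣ) : Matrix V V ℝ) = (((Unitary.toUnits hA.eigenvectorUnitary)⁻¹ : (Matrix V V ℝ)ˣ) : Matrix V V ℝ) := rfl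
  rw [hu', spectrum.units_conjugate, spec_diag]
  ext x; simp [Function.comp]

omit [Fintype V] [DecidableEq V] in
lemma star_eq_transpose (M : Matrix V V ℝ) : star M = Mᵀ := by
  ext i j; simp [Matrix.star_apply]

lemma quad_decomp {A : Matrix V V ℝ} (hA : A.IsHermitian) (z : V → ℝ) :
    ∃ y : V → ℝ, z ⬝ᵥ A *ᵥ z = ∑ i, hA.eigenvalues i * (y i)^2 ∧ z ⬝ᵥ z = ∑ i, (y i)^2 := by
  set Um := (hA.eigenvectorUnitary : Matrix V V ℝ) with hUm
  have h2 : Um * star Um = 1 := (Matrix.mem_unitaryGroup_iff).mp (hA.eigenvectorUnitary).2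
  have h1 : star Um * Um = 1 := (Matrix.mem_unitaryGroup_iff').mp (hA.eigenvectorUnitary).2
  set y := star Um *ᵥ z with hy
  have hz : Um *ᵥ y = z := by
    rw [hy, Matrix.mulVec_mulVec, h2, Matrix.one_mulVec]
  have key : ∀ w : V → ℝ, z ⬝ᵥ (Um *ᵥ w) = y ⬝ᵥ w := by
    intro w
    rw [Matrix.dotProduct_mulVec, hy, ← Matrix.mulVec_transpose, ← star_eq_transpose]
  have hdiag : ∀ w : V → ℝ, w ⬝ᵥ ((Matrix.diagonal (RCLike.ofReal ∘ hA.eigenvalues) : Matrix V V ℝ) *ᵥ w) = ∑ i, hA.eigenvalues i * (w i)^2 := by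
    intro w
    simp [dotProduct, Matrix.mulVec_diagonal, Function.comp]
    refine Finset.sum_congr rfl fun i _ => by ring
  refine ⟨y, ?_, ?_⟩
  · conv_lhs => rw [hA.spectral_theorem, Unitary.conjStarAlgAut_apply, ← Matrix.mulVec_mulVec, ← Matrix.mulVec_mulVec, key, ← hy]
    exact hdiag y
  · have : z ⬝ᵥ z = z ⬝ᵥ (Um *ᵥ y) := by rw [hz]
    rw [this, key]
    simp [dotProduct, pow_two]

lemma dot_eq (A : Matrix V V ℝ) (v w : V → ℝ) :
    v ⬝ᵥ A *ᵥ w = ∑ a, ∑ b, A a b * v a * w b := by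
  simp [dotProduct, Matrix.mulVec, Finset.mul_sum]
  exact Finset.sum_congr rfl fun a _ => Finset.sum_congr rfl fun b _ => by ring

lemma spec_summary {A : Matrix V V ℝ} (hA : A.IsHermitian) (hpos : ∀ a b, 0 ≤ A a b)
    [Nonempty V] :
    (∃ x : V → ℝ, (∀ v, 0 ≤ x v) ∧ x ⬝ᵥ x = 1 ∧ x ⬝ᵥ A *ᵥ x = sSup (spectrum ℝ A)) ∧
    (∀ z : V → ℝ, z ⬝ᵥ A *ᵥ z ≤ sSup (spectrum ℝ A) * (z ⬝ᵥ z)) ∧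
    (∀ z : V → ℝ, -(sSup (spectrum ℝ A) * (z ⬝ᵥ z)) ≤ z ⬝ᵥ A *ᵥ z) := by
  classical
  set lam := sSup (spectrum ℝ A) with hlam
  have hspec : spectrum ℝ A = Set.range hA.eigenvalues := spec_eq_range hA
  have hfin : (Set.range hA.eigenvalues).Finite := Set.finite_range _
  have hne : (Set.range hA.eigenvalues).Nonempty := Set.range_nonempty _
  have hub : ∀ j, hA.eigenvalues j ≤ lam := by
    intro j
    rw [hlam, hspec]
    exact le_csSup hfin.bddAbove ⟨j, rfl⟩
  have hmem : lam ∈ Set.range hA.eigenvalues := by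
    rw [hlam, hspec]; exact hne.csSup_mem hfin
  obtain ⟨i0, hi0⟩ := hmem
  have hunit : ∀ j, (⇑(hA.eigenvectorBasis j) : V → ℝ) ⬝ᵥ ⇑(hA.eigenvectorBasis j) = 1 := by
    intro j
    have h1 : star (hA.eigenvectorUnitary : Matrix V V ℝ) * (hA.eigenvectorUnitary : Matrix V V ℝ) = 1 :=
      (Matrix.mem_unitaryGroup_iff').mp (hA.eigenvectorUnitary).2
    have := congrFun (congrFun h1 j) j
    simp [Matrix.mul_apply, Matrix.one_apply, Matrix.star_apply] at this
    simpa [dotProduct, hA.eigenvectorUnitary_apply] using this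
  have hup : ∀ z : V → ℝ, z ⬝ᵥ A *ᵥ z ≤ lam * (z ⬝ᵥ z) := by
    intro z
    obtain ⟨y, h1, h2⟩ := quad_decomp hA z
    rw [h1, h2, Finset.mul_sum]
    exact Finset.sum_le_sum fun i _ => mul_le_mul_of_nonneg_right (hub i) (sq_nonneg _)
  have habs : ∀ v : V → ℝ, v ⬝ᵥ A *ᵥ v ≤ (fun a => |v a|) ⬝ᵥ A *ᵥ (fun a => |v a|) ∧
      -((fun a => |v a|) ⬝ᵥ A *ᵥ (fun a => |v a|)) ≤ v ⬝ᵥ A *ᵥ v := by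
    intro v
    have h1 : |v ⬝ᵥ A *ᵥ v| ≤ (fun a => |v a|) ⬝ᵥ A *ᵥ (fun a => |v a|) := by
      rw [dot_eq, dot_eq]
      refine (Finset.abs_sum_le_sum_abs _ _).trans ?_
      refine Finset.sum_le_sum fun a _ => ?_
      refine (Finset.abs_sum_le_sum_abs _ _).trans ?_
      refine Finset.sum_le_sum fun b _ => ?_
      rw [abs_mul, abs_mul, abs_of_nonneg (hpos a b)]
    exact ⟨(le_abs_self _).trans h1, neg_le_of_neg_le (by linarith [neg_abs_le (v ⬝ᵥ A *ᵥ v)])⟩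
  have hlb : ∀ j, -lam ≤ hA.eigenvalues j := by
    intro j
    set v := (⇑(hA.eigenvectorBasis j) : V → ℝ)
    have hev : A *ᵥ v = hA.eigenvalues j • v := hA.mulVec_eigenvectorBasis j
    have h3 : v ⬝ᵥ A *ᵥ v = hA.eigenvalues j := by
      rw [hev, dotProduct_smul, hunit j]; simp
    have h4 := (habs v).2
    have h5 := hup (fun a => |v a|)
    have h6 : (fun a => |v a|) ⬝ᵥ (fun a => |v a|) = 1 := by
      simpa [dotProduct, abs_mul_abs_self] using hunit j
    rw [h6, mul_one] at h5
    linarith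
  have hdn : ∀ z : V → ℝ, -(lam * (z ⬝ᵥ z)) ≤ z ⬝ᵥ A *ᵥ z := by
    intro z
    obtain ⟨y, h1, h2⟩ := quad_decomp hA z
    rw [h1, h2, Finset.mul_sum, ← Finset.sum_neg_distrib]
    exact Finset.sum_le_sum fun i _ => by nlinarith [hlb i, sq_nonneg (y i)]
  refine ⟨?_, hup, hdn⟩
  set v := (⇑(hA.eigenvectorBasis i0) : V → ℝ)
  have hev : A *ᵥ v = lam • v := by rw [hA.mulVec_eigenvectorBasis i0, hi0]
  have h3 : v ⬝ᵥ A *ᵥ v = lam := by rw [hev, dotProduct_smul, hunit i0]; simp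
  refine ⟨fun a => |v a|, fun a => abs_nonneg _, ?_, ?_⟩
  · simpa [dotProduct, abs_mul_abs_self] using hunit i0
  · have h6 : (fun a => |v a|) ⬝ᵥ (fun a => |v a|) = 1 := by
      simpa [dotProduct, abs_mul_abs_self] using hunit i0
    have := hup (fun a => |v a|)
    rw [h6, mul_one] at this
    linarith [(habs v).1, h3]

omit [Fintype V] [DecidableEq V] in
lemma eXY_eq (G : SimpleGraph V) [DecidableRel G.Adj] (X Y : Finset V) :
    (eXY G X Y : ℝ) = ∑ u ∈ X, ∑ w ∈ Y, G.adjMatrix ℝ u w := by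
  classical
  rw [eXY, Finset.card_filter]
  push_cast
  rw [Finset.sum_product]
  exact Finset.sum_congr rfl fun u _ => Finset.sum_congr rfl fun w _ => by
    simp [SimpleGraph.adjMatrix_apply]

end Aux

noncomputable def Hh (k : ℕ) : ℝ := (harmonic k : ℝ)

lemma Hh_eq (k : ℕ) : Hh k = ∑ r ∈ Finset.range k, ((r : ℝ) + 1)⁻¹ := by
  rw [Hh, harmonic]; push_cast; rfl

lemma Hh_nonneg (k : ℕ) : 0 ≤ Hh k := by
  rw [Hh_eq]; positivity

lemma Hh_one_le {k : ℕ} (hk : 1 ≤ k) : 1 ≤ Hh k := by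
  rw [Hh_eq]
  calc (1:ℝ) = (((0:ℕ):ℝ) + 1)⁻¹ := by norm_num
    _ ≤ ∑ r ∈ Finset.range k, ((r : ℝ) + 1)⁻¹ := by
        refine Finset.single_le_sum (f := fun r : ℕ => ((r:ℝ)+1)⁻¹) (fun i _ => by positivity) ?_
        simp only [Finset.mem_range]; omega

lemma Hh_le (k : ℕ) : Hh k ≤ 1 + Real.log k := harmonic_le_one_add_log k

lemma Hh_succ (j : ℕ) : Hh (j+1) = Hh j + ((j:ℝ)+1)⁻¹ := by
  rw [Hh, Hh, harmonic_succ]; push_cast; ring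

noncomputable def Gf (j : ℕ) : ℝ := Real.sqrt (j * Hh j)

lemma Gf_nonneg (j : ℕ) : 0 ≤ Gf j := Real.sqrt_nonneg _

lemma Gf_zero : Gf 0 = 0 := by rw [Gf]; norm_num

lemma Gf_id (j : ℕ) : ((j:ℝ)+1) * Hh (j+1) = j * Hh j + (Hh j + 1) := by
  rw [Hh_succ]
  have h : ((j:ℝ)+1) ≠ 0 := by positivity
  field_simp
  ring

lemma Gf_sq {j : ℕ} : Gf j ^ 2 = j * Hh j := by
  rw [Gf, Real.sq_sqrt]
  exact mul_nonneg (by positivity) (Hh_nonneg j)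

lemma Gf_mono (j : ℕ) : Gf j ≤ Gf (j+1) := by
  apply Real.sqrt_le_sqrt
  push_cast
  rw [Gf_id j]
  linarith [Hh_nonneg j]

lemma Sbound {m : ℕ} (hm : 1 ≤ m) :
    ∑ i ∈ Finset.range m, (Gf (i+1) - Gf i)^2 ≤ ((1/2) * Real.log m + 2)^2 := by
  set L := Real.log m with hL
  have hL0 : 0 ≤ L := Real.log_natCast_nonneg m
  have hstep : ∀ i : ℕ, 1 ≤ i → i ≤ m → (Gf (i+1) - Gf i)^2 ≤ ((4 + L)/4) * ((i:ℝ))⁻¹ := by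
    intro i hi him
    have hHi : 1 ≤ Hh i := Hh_one_le hi
    have hipos : (0:ℝ) < i := by exact_mod_cast hi
    have hA2 : Gf i ^ 2 = i * Hh i := Gf_sq
    have hApos : 0 < Gf i := by
      rw [Gf]
      apply Real.sqrt_pos.2
      nlinarith
    have hB := Gf_mono i
    have hdiff : (Gf (i+1) - Gf i) * (Gf (i+1) + Gf i) = Hh i + 1 := by
      have h1 : Gf (i+1) ^2 = ((i:ℝ)+1) * Hh (i+1) := by rw [Gf_sq]; push_cast; ring
      have := Gf_id i
      nlinarith [hA2, h1]
    have hBA : 2 * Gf i ≤ Gf (i+1) + Gf i := by linarith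
    have hd1 : Gf (i+1) - Gf i ≤ (Hh i + 1) / (2 * Gf i) := by
      rw [le_div_iff₀ (by positivity)]
      calc (Gf (i+1) - Gf i) * (2 * Gf i)
          ≤ (Gf (i+1) - Gf i) * (Gf (i+1) + Gf i) :=
            mul_le_mul_of_nonneg_left hBA (sub_nonneg.2 hB)
        _ = Hh i + 1 := hdiff
    have hHiL : Hh i ≤ 1 + L := by
      refine (Hh_le i).trans ?_
      have : Real.log i ≤ L := by
        rw [hL]
        apply Real.log_le_log (by positivity)
        exact_mod_cast him
      linarith
    have hkey : (Hh i + 1)^2 ≤ (4 + L) * Hh i := by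
      nlinarith [hHi, hHiL, mul_le_mul_of_nonneg_left hHiL (Hh_nonneg i)]
    calc (Gf (i+1) - Gf i)^2 ≤ ((Hh i + 1) / (2 * Gf i))^2 :=
          pow_le_pow_left₀ (by linarith) hd1 2
      _ = (Hh i + 1)^2 / (4 * (i * Hh i)) := by
          rw [div_pow, mul_pow, hA2]; norm_num
      _ ≤ ((4 + L) * Hh i) / (4 * (i * Hh i)) := by
          apply div_le_div_of_nonneg_right hkey
          nlinarith
      _ = ((4 + L)/4) * ((i:ℝ))⁻¹ := by
          field_simp
  obtain ⟨mm, rfl⟩ : ∃ mm, m = mm + 1 := ⟨m-1, (Nat.succ_pred_eq_of_pos hm).symm⟩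
  rw [Finset.sum_range_succ']
  have ht0 : (Gf (0+1) - Gf 0)^2 = 1 := by
    have h1 : Gf 1 = 1 := by
      rw [Gf, show Hh 1 = 1 by rw [Hh_eq]; norm_num]
      norm_num
    have h0 : Gf 0 = 0 := by rw [Gf]; norm_num
    rw [show (0+1 : ℕ) = 1 from rfl, h1, h0]
    norm_num
  have hrest : ∑ i ∈ Finset.range mm, (Gf (i+1+1) - Gf (i+1))^2 ≤ ((4+L)/4) * (1 + L) := by
    calc ∑ i ∈ Finset.range mm, (Gf (i+1+1) - Gf (i+1))^2
        ≤ ∑ i ∈ Finset.range mm, ((4 + L)/4) * (((i:ℝ)+1))⁻¹ := by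
          refine Finset.sum_le_sum fun i hi => ?_
          have := hstep (i+1) (by omega) (by have := Finset.mem_range.mp hi; omega)
          convert this using 3
          · rfl
          push_cast
          ring
      _ = ((4+L)/4) * Hh mm := by rw [Hh_eq, Finset.mul_sum]
      _ ≤ ((4+L)/4) * (1 + L) := by
          apply mul_le_mul_of_nonneg_left ?_ (by linarith)
          rcases Nat.eq_zero_or_pos mm with h | h
          · subst h
            rw [show Hh 0 = 0 by rw [Hh_eq]; norm_num]
            linarith
          · refine (Hh_le mm).trans ?_
            have : Real.log mm ≤ L := by
              rw [hL]
              apply Real.log_le_log (by exact_mod_cast h)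
              push_cast; linarith
            linarith
  rw [ht0]
  nlinarith [hrest, hL0]

section Aux2

open Matrix Finset

set_option linter.unusedSectionVars false

variable {V : Type*} [Fintype V] [DecidableEq V]

lemma Dbound (G : SimpleGraph V) [DecidableRel G.Adj] {α : ℝ} (hα : 0 ≤ α)
    (hd : ∀ X Y : Finset V, (eXY G X Y : ℝ) ≤ α * Real.sqrt ((X.card : ℝ) * (Y.card : ℝ)))
    (T Q : Finset V) :
    ∑ w ∈ Q, (∑ u ∈ T, G.adjMatrix ℝ u w) ^ 2 ≤ α ^ 2 * T.card * Hh T.card := by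
  classical
  set n := T.card with hn
  set d : V → ℕ := fun w => (T.filter (fun u => G.Adj u w)).card with hdd
  have hdle : ∀ w, d w ≤ n := fun w => (Finset.card_filter_le _ _)
  have hsum : ∀ w, ∑ u ∈ T, G.adjMatrix ℝ u w = (d w : ℝ) := by
    intro w
    show ∑ u ∈ T, G.adjMatrix ℝ u w = ((T.filter (fun u => G.Adj u w)).card : ℝ)
    rw [Finset.card_filter]
    push_cast
    exact Finset.sum_congr rfl fun u _ => by simp [SimpleGraph.adjMatrix_apply]
  have hsq : ∀ w : V, ((d w : ℝ)) ^ 2 = ∑ r ∈ Finset.range n, (if r + 1 ≤ d w then (d w : ℝ) else 0) := by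
    intro w
    rw [← Finset.sum_filter]
    have hf : ((Finset.range n).filter fun a => a + 1 ≤ d w) = Finset.range (d w) := by
      ext r
      simp only [Finset.mem_filter, Finset.mem_range]
      have := hdle w
      omega
    rw [hf, Finset.sum_const, Finset.card_range]
    push_cast; ring
  calc ∑ w ∈ Q, (∑ u ∈ T, G.adjMatrix ℝ u w) ^ 2
      = ∑ w ∈ Q, ∑ r ∈ Finset.range n, (if r + 1 ≤ d w then (d w : ℝ) else 0) := by
        refine Finset.sum_congr rfl fun w _ => by rw [hsum w, hsq w]
    _ = ∑ r ∈ Finset.range n, ∑ w ∈ Q, (if r + 1 ≤ d w then (d w : ℝ) else 0) := Finset.sum_comm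
    _ ≤ ∑ r ∈ Finset.range n, α ^ 2 * n / (r + 1) := by
        refine Finset.sum_le_sum fun r _ => ?_
        rw [← Finset.sum_filter]
        set Wr := Q.filter (fun w => r + 1 ≤ d w) with hWr
        have hE : ∑ w ∈ Wr, (d w : ℝ) = (eXY G T Wr : ℝ) := by
          rw [eXY_eq, Finset.sum_comm (f := fun u w => G.adjMatrix ℝ u w)]
          exact (Finset.sum_congr rfl fun w _ => (hsum w)).symm
        by_cases hemp : Wr = ∅
        · rw [hemp]
          simp
          positivity
        have hc : 0 < (Wr.card : ℝ) := by
          have := Finset.card_pos.2 (Finset.nonempty_of_ne_empty hemp)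
          exact_mod_cast this
        have h1 : ((r : ℝ) + 1) * Wr.card ≤ ∑ w ∈ Wr, (d w : ℝ) := by
          calc ((r : ℝ) + 1) * Wr.card = ∑ _w ∈ Wr, ((r:ℝ)+1) := by
                rw [Finset.sum_const, nsmul_eq_mul, mul_comm]
            _ ≤ ∑ w ∈ Wr, (d w : ℝ) := by
                refine Finset.sum_le_sum fun w hw => ?_
                have h := (Finset.mem_filter.mp hw).2
                exact_mod_cast h
        have h2 : ∑ w ∈ Wr, (d w : ℝ) ≤ α * Real.sqrt ((n : ℝ) * Wr.card) := hE ▸ hd T Wr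
        have hsc : 0 < Real.sqrt (Wr.card) := Real.sqrt_pos.2 hc
        have hsplit : Real.sqrt ((n:ℝ) * Wr.card) = Real.sqrt n * Real.sqrt Wr.card :=
          Real.sqrt_mul (by positivity) _
        have h3 : ((r:ℝ)+1) * Real.sqrt Wr.card ≤ α * Real.sqrt n := by
          have hcc : (Wr.card : ℝ) = Real.sqrt Wr.card * Real.sqrt Wr.card :=
            (Real.mul_self_sqrt (by positivity)).symm
          have h4 := h1.trans h2
          rw [hsplit] at h4
          have h5 : ((r:ℝ)+1) * (Real.sqrt Wr.card * Real.sqrt Wr.card) ≤ α * (Real.sqrt (n:ℝ) * Real.sqrt Wr.card) := by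
            rw [← hcc]; exact h4
          have h6 : ((r:ℝ)+1) * Real.sqrt Wr.card * Real.sqrt Wr.card ≤ α * Real.sqrt (n:ℝ) * Real.sqrt Wr.card := by nlinarith [h5]
          exact le_of_mul_le_mul_right h6 hsc
        have hnn : Real.sqrt n * Real.sqrt n = (n : ℝ) := Real.mul_self_sqrt (by positivity)
        calc ∑ w ∈ Wr, (d w : ℝ) ≤ α * (Real.sqrt n * Real.sqrt Wr.card) := by rw [← hsplit]; exact h2
          _ ≤ α * (Real.sqrt n * ((α * Real.sqrt n) / ((r:ℝ)+1))) := by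
              have : Real.sqrt Wr.card ≤ (α * Real.sqrt n) / ((r:ℝ)+1) := by
                rw [le_div_iff₀ (by positivity)]
                linarith [h3]
              exact mul_le_mul_of_nonneg_left (mul_le_mul_of_nonneg_left this (Real.sqrt_nonneg _)) hα
          _ = α ^ 2 * n / (r + 1) := by
              field_simp
              nlinarith [hnn]
    _ = α ^ 2 * n * Hh n := by
        rw [Hh_eq, Finset.mul_sum]
        exact Finset.sum_congr rfl fun r _ => by rw [div_eq_mul_inv]

lemma CSfin {ι : Type*} (s : Finset ι) (f g : ι → ℝ) (h0 : 0 ≤ ∑ i ∈ s, f i * g i) :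
    ∑ i ∈ s, f i * g i ≤ Real.sqrt (∑ i ∈ s, f i ^ 2) * Real.sqrt (∑ i ∈ s, g i ^ 2) := by
  have h1 := Finset.sum_mul_sq_le_sq_mul_sq s f g
  calc ∑ i ∈ s, f i * g i = Real.sqrt ((∑ i ∈ s, f i * g i)^2) := (Real.sqrt_sq h0).symm
    _ ≤ Real.sqrt ((∑ i ∈ s, f i ^ 2) * ∑ i ∈ s, g i ^ 2) := Real.sqrt_le_sqrt h1
    _ = _ := Real.sqrt_mul (by positivity) _

lemma key (G : SimpleGraph V) [DecidableRel G.Adj] {α : ℝ} (hα : 0 ≤ α)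
    (hd : ∀ X Y : Finset V, (eXY G X Y : ℝ) ≤ α * Real.sqrt ((X.card : ℝ) * (Y.card : ℝ)))
    (P Q : Finset V) (hP : P.Nonempty) (g h : V → ℝ) (hg : ∀ v, 0 ≤ g v) (hh : ∀ v, 0 ≤ h v) :
    ∑ u ∈ P, ∑ w ∈ Q, G.adjMatrix ℝ u w * g u * h w ≤
      α * ((1/2) * Real.log P.card + 2) * Real.sqrt (∑ u ∈ P, g u ^ 2) *
        Real.sqrt (∑ w ∈ Q, h w ^ 2) := by
  classical
  set m := P.card with hm
  have hm1 : 1 ≤ m := Finset.card_pos.2 hP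
  obtain ⟨v0, hv0⟩ := hP
  set e : Fin m → V := fun i => ((P.equivFin.symm i : P) : V) with he
  have heinj : Function.Injective e := fun i j hij => by
    apply P.equivFin.symm.injective
    exact Subtype.ext hij
  set σ := Tuple.sort (fun i => - g (e i)) with hσ
  set u : Fin m → V := fun i => e (σ i) with hu
  have huinj : Function.Injective u := heinj.comp σ.injective
  have humem : ∀ i, u i ∈ P := fun i => (P.equivFin.symm (σ i)).2
  have humono : ∀ i j : Fin m, i ≤ j → g (u j) ≤ g (u i) := by
    intro i j hij
    have := Tuple.monotone_sort (fun i => - g (e i)) hij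
    simpa [hu] using this
  set w : ℕ → V := fun k => if hk : k < m then u ⟨k, hk⟩ else v0 with hw
  set a : ℕ → ℝ := fun k => g (w k) with ha
  have ha0 : ∀ k, 0 ≤ a k := fun k => hg _
  have hamono : ∀ i j : ℕ, i ≤ j → j < m → a j ≤ a i := by
    intro i j hij hjm
    have him : i < m := lt_of_le_of_lt hij hjm
    have : a j = g (u ⟨j, hjm⟩) := by rw [ha]; simp [hw, hjm]
    rw [this]
    have h2 : a i = g (u ⟨i, him⟩) := by rw [ha]; simp [hw, him]
    rw [h2]
    exact humono _ _ hij
  have hwinj : Set.InjOn w (Finset.range m : Set ℕ) := by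
    intro x hx y hy hxy
    simp only [Finset.coe_range, Set.mem_Iio] at hx hy
    rw [hw] at hxy
    simp only [dif_pos hx, dif_pos hy] at hxy
    exact congrArg Fin.val (huinj hxy)
  have hwinj' : ∀ j : ℕ, j ≤ m → Set.InjOn w (Finset.range j : Set ℕ) := by
    intro j hj
    exact hwinj.mono (by intro x hx; simp at hx ⊢; omega)
  have himg : Finset.image w (Finset.range m) = P := by
    apply Finset.eq_of_subset_of_card_le
    · intro x hx
      obtain ⟨k, hk, rfl⟩ := Finset.mem_image.mp hx
      have hkm := Finset.mem_range.mp hk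
      rw [hw]
      simp [hkm]
      exact humem _
    · rw [Finset.card_image_of_injOn hwinj, Finset.card_range]
  set c : V → ℝ := fun x => ∑ w' ∈ Q, G.adjMatrix ℝ x w' * h w' with hc
  have hc0 : ∀ x, 0 ≤ c x := by
    intro x
    apply Finset.sum_nonneg fun w' _ => ?_
    have : (0:ℝ) ≤ G.adjMatrix ℝ x w' := by simp [SimpleGraph.adjMatrix_apply]; split <;> norm_num
    exact mul_nonneg this (hh w')
  set nh := Real.sqrt (∑ w' ∈ Q, h w' ^ 2) with hnh
  have hnh0 : 0 ≤ nh := Real.sqrt_nonneg _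
  have hC : ∀ j : ℕ, 1 ≤ j → j ≤ m → ∑ k ∈ Finset.range j, c (w k) ≤ α * Gf j * nh := by
    intro j hj1 hjm
    set T := Finset.image w (Finset.range j) with hT
    have hcardT : T.card = j := by
      rw [hT, Finset.card_image_of_injOn (hwinj' j hjm), Finset.card_range]
    have hsum : ∑ k ∈ Finset.range j, c (w k) = ∑ x ∈ T, c x := by
      rw [hT, Finset.sum_image (by intro x hx y hy hxy; exact hwinj' j hjm (by simpa using hx) (by simpa using hy) hxy)]
    rw [hsum]
    have hswap : ∑ x ∈ T, c x = ∑ w' ∈ Q, (∑ x ∈ T, G.adjMatrix ℝ x w') * h w' := by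
      rw [hc]
      rw [Finset.sum_comm]
      exact Finset.sum_congr rfl fun w' _ => by rw [Finset.sum_mul]
    rw [hswap]
    have hCS := CSfin Q (fun w' => ∑ x ∈ T, G.adjMatrix ℝ x w') h (by
      apply Finset.sum_nonneg fun w' _ => ?_
      apply mul_nonneg ?_ (hh w')
      apply Finset.sum_nonneg fun x _ => ?_
      simp [SimpleGraph.adjMatrix_apply]; split <;> norm_num)
    refine hCS.trans ?_
    have hD := Dbound G hα hd T Q
    rw [hcardT] at hD
    have : Real.sqrt (∑ w' ∈ Q, (∑ x ∈ T, G.adjMatrix ℝ x w') ^ 2) ≤ α * Gf j := by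
      refine (Real.sqrt_le_sqrt hD).trans ?_
      rw [show α^2 * j * Hh j = (α * Gf j)^2 by rw [mul_pow, Gf_sq]; ring]
      rw [Real.sqrt_sq (mul_nonneg hα (Gf_nonneg j))]
    calc Real.sqrt (∑ w' ∈ Q, (∑ x ∈ T, G.adjMatrix ℝ x w') ^ 2) * nh
        ≤ (α * Gf j) * nh := mul_le_mul_of_nonneg_right this hnh0
      _ = α * Gf j * nh := rfl
  have hLHS : ∑ x ∈ P, ∑ w' ∈ Q, G.adjMatrix ℝ x w' * g x * h w' = ∑ k ∈ Finset.range m, a k * c (w k) := by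
    rw [← himg, Finset.sum_image (fun x hx y hy hxy => hwinj (by simpa using hx) (by simpa using hy) hxy)]
    refine Finset.sum_congr rfl fun k _ => ?_
    rw [ha, hc, Finset.mul_sum]
    exact Finset.sum_congr rfl fun w' _ => by ring
  rw [hLHS]
  have hbp1 := Finset.sum_range_by_parts a (fun k => c (w k)) m
  have hbp2 := Finset.sum_range_by_parts a (fun k => Gf (k+1) - Gf k) m
  simp only [smul_eq_mul] at hbp1 hbp2
  have htel : ∀ j : ℕ, ∑ k ∈ Finset.range j, (Gf (k+1) - Gf k) = Gf j := by
    intro j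
    rw [Finset.sum_range_sub Gf j, Gf_zero, sub_zero]
  have hbp1' : ∑ k ∈ Finset.range m, a k * c (w k) =
      a (m-1) * (∑ k ∈ Finset.range m, c (w k)) +
        ∑ i ∈ Finset.range (m-1), (a i - a (i+1)) * (∑ j ∈ Finset.range (i+1), c (w j)) := by
    rw [hbp1, sub_eq_add_neg, ← Finset.sum_neg_distrib]
    congr 1
    exact Finset.sum_congr rfl fun i _ => by ring
  have hbp2' : ∑ k ∈ Finset.range m, a k * (Gf (k+1) - Gf k) =
      a (m-1) * Gf m + ∑ i ∈ Finset.range (m-1), (a i - a (i+1)) * Gf (i+1) := by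
    rw [hbp2, htel m, sub_eq_add_neg, ← Finset.sum_neg_distrib]
    congr 1
    refine Finset.sum_congr rfl fun i _ => ?_
    rw [htel (i+1)]
    ring
  have hstep1 : ∑ k ∈ Finset.range m, a k * c (w k) ≤
      (α * nh) * ∑ k ∈ Finset.range m, a k * (Gf (k+1) - Gf k) := by
    rw [hbp1']
    have t1 : a (m-1) * (∑ k ∈ Finset.range m, c (w k)) ≤ a (m-1) * (α * Gf m * nh) :=
      mul_le_mul_of_nonneg_left (hC m hm1 le_rfl) (ha0 _)
    have t2 : ∑ i ∈ Finset.range (m-1), (a i - a (i+1)) * (∑ j ∈ Finset.range (i+1), c (w j)) ≤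
        ∑ i ∈ Finset.range (m-1), (a i - a (i+1)) * (α * Gf (i+1) * nh) := by
      refine Finset.sum_le_sum fun i hi => ?_
      have hi' := Finset.mem_range.mp hi
      have hco : 0 ≤ a i - a (i+1) := by
        have := hamono i (i+1) (Nat.le_succ i) (by omega)
        linarith
      exact mul_le_mul_of_nonneg_left (hC (i+1) (by omega) (by omega)) hco
    calc a (m-1) * (∑ k ∈ Finset.range m, c (w k)) +
          ∑ i ∈ Finset.range (m-1), (a i - a (i+1)) * (∑ j ∈ Finset.range (i+1), c (w j))
        ≤ a (m-1) * (α * Gf m * nh) +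
          ∑ i ∈ Finset.range (m-1), (a i - a (i+1)) * (α * Gf (i+1) * nh) := add_le_add t1 t2
      _ = (α * nh) * (a (m-1) * Gf m + ∑ i ∈ Finset.range (m-1), (a i - a (i+1)) * Gf (i+1)) := by
          rw [mul_add, Finset.mul_sum]
          congr 1
          · ring
          · exact Finset.sum_congr rfl fun i _ => by ring
      _ = (α * nh) * ∑ k ∈ Finset.range m, a k * (Gf (k+1) - Gf k) := by rw [← hbp2']
  have hg2 : ∑ k ∈ Finset.range m, a k ^ 2 = ∑ x ∈ P, g x ^ 2 := by
    rw [← himg, Finset.sum_image (fun x hx y hy hxy => hwinj (by simpa using hx) (by simpa using hy) hxy)]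
  have hL0 : (0:ℝ) ≤ (1/2) * Real.log m + 2 := by
    have := Real.log_natCast_nonneg m
    linarith
  have hstep2 : ∑ k ∈ Finset.range m, a k * (Gf (k+1) - Gf k) ≤
      Real.sqrt (∑ x ∈ P, g x ^ 2) * ((1/2) * Real.log m + 2) := by
    have hcs := CSfin (Finset.range m) a (fun k => Gf (k+1) - Gf k) (by
      refine Finset.sum_nonneg fun k _ => mul_nonneg (ha0 k) ?_
      have := Gf_mono k
      linarith)
    refine hcs.trans ?_
    rw [hg2]
    refine mul_le_mul_of_nonneg_left ?_ (Real.sqrt_nonneg _)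
    refine (Real.sqrt_le_sqrt (Sbound hm1)).trans ?_
    rw [Real.sqrt_sq hL0]
  calc ∑ k ∈ Finset.range m, a k * c (w k)
      ≤ (α * nh) * ∑ k ∈ Finset.range m, a k * (Gf (k+1) - Gf k) := hstep1
    _ ≤ (α * nh) * (Real.sqrt (∑ x ∈ P, g x ^ 2) * ((1/2) * Real.log m + 2)) := by
        exact mul_le_mul_of_nonneg_left hstep2 (mul_nonneg hα hnh0)
    _ = α * ((1/2) * Real.log m + 2) * Real.sqrt (∑ x ∈ P, g x ^ 2) * nh := by ring

end Aux2

open Matrix Finset in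
/-- Corollary: for a bipartite graph with partite sets `U`, `W`, with at least one edge,
and `n = min{|U|, |W|}`, `M(G) ≤ λmax(G) ≤ ((1/2)·log n + 2)·M(G)`. -/
theorem statement10 {V : Type*} [Fintype V] (G : SimpleGraph V)
    (U W : Finset V) (hU : U.Nonempty) (hW : W.Nonempty)
    (hdisj : Disjoint U W) (hcover : ∀ v : V, v ∈ U ∨ v ∈ W)
    (hbip : ∀ a b, G.Adj a b → (a ∈ U ∧ b ∈ W) ∨ (a ∈ W ∧ b ∈ U))
    (hedge : ∃ a b, G.Adj a b) :
    MG G ≤ lamMax G ∧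
      lamMax G ≤ ((1 / 2 : ℝ) * Real.log ((min U.card W.card : ℕ) : ℝ) + 2) * MG G := by
  classical
  have hVne : Nonempty V := ⟨hU.choose⟩
  set A := G.adjMatrix ℝ with hAdef
  have hlam_def : lamMax G = sSup (spectrum ℝ A) := rfl
  have hA : A.IsHermitian := by
    show Matrix.conjTranspose A = A
    ext i j
    rw [hAdef]
    simp only [Matrix.conjTranspose_apply, SimpleGraph.adjMatrix_apply, star_trivial]
    rw [G.adj_comm]
  have hpos : ∀ a b, 0 ≤ A a b := by
    intro a b
    rw [hAdef]
    simp only [SimpleGraph.adjMatrix_apply]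
    split <;> norm_num
  have hAsym : ∀ a b, A a b = A b a := by
    intro a b
    rw [hAdef]
    simp only [SimpleGraph.adjMatrix_apply]
    simp [G.adj_comm]
  obtain ⟨⟨x, hx0, hx1, hxquad⟩, hup, hdn⟩ := spec_summary hA hpos
  set lam := sSup (spectrum ℝ A) with hlam
  set MS := {r : ℝ | ∃ X Y : Finset V, X.Nonempty ∧ Y.Nonempty ∧
    r = (eXY G X Y : ℝ) / Real.sqrt ((X.card : ℝ) * (Y.card : ℝ))} with hMS
  have hMGdef : MG G = sSup MS := rfl
  obtain ⟨a0, b0, hab0⟩ := hedge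
  have hmem0 : (eXY G {a0} {b0} : ℝ) / Real.sqrt ((({a0} : Finset V).card : ℝ) * (({b0} : Finset V).card : ℝ)) ∈ MS :=
    ⟨{a0}, {b0}, Finset.singleton_nonempty _, Finset.singleton_nonempty _, rfl⟩
  have hMSne : MS.Nonempty := ⟨_, hmem0⟩
  have hMSbdd : BddAbove MS := by
    apply Set.Finite.bddAbove
    apply Set.Finite.subset (Set.finite_range (fun p : Finset V × Finset V =>
      (eXY G p.1 p.2 : ℝ) / Real.sqrt ((p.1.card : ℝ) * (p.2.card : ℝ))))
    rintro r ⟨X, Y, _, _, rfl⟩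
    exact ⟨(X, Y), rfl⟩
  have hα0 : 0 ≤ MG G := by
    rw [hMGdef]
    refine le_csSup_of_le hMSbdd hmem0 (by positivity)
  have hαe : ∀ X Y : Finset V, (eXY G X Y : ℝ) ≤ MG G * Real.sqrt ((X.card : ℝ) * (Y.card : ℝ)) := by
    intro X Y
    rcases Finset.eq_empty_or_nonempty X with rfl | hX
    · have h0 : eXY G ∅ Y = 0 := by rw [eXY]; simp
      rw [h0]
      push_cast
      positivity
    rcases Finset.eq_empty_or_nonempty Y with rfl | hY
    · have h0 : eXY G X ∅ = 0 := by rw [eXY]; simp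
      rw [h0]
      push_cast
      positivity
    have hXc : (0:ℝ) < X.card := by exact_mod_cast Finset.card_pos.2 hX
    have hYc : (0:ℝ) < Y.card := by exact_mod_cast Finset.card_pos.2 hY
    have hsp : 0 < Real.sqrt ((X.card : ℝ) * (Y.card : ℝ)) := Real.sqrt_pos.2 (by positivity)
    have hmem : (eXY G X Y : ℝ) / Real.sqrt ((X.card : ℝ) * (Y.card : ℝ)) ≤ MG G := by
      rw [hMGdef]
      exact le_csSup hMSbdd ⟨X, Y, hX, hY, rfl⟩
    calc (eXY G X Y : ℝ) = (eXY G X Y : ℝ) / Real.sqrt ((X.card : ℝ) * (Y.card : ℝ)) *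
          Real.sqrt ((X.card : ℝ) * (Y.card : ℝ)) := by field_simp
      _ ≤ MG G * Real.sqrt ((X.card : ℝ) * (Y.card : ℝ)) :=
          mul_le_mul_of_nonneg_right hmem hsp.le
  have hbil : ∀ p q : V → ℝ, p ⬝ᵥ A *ᵥ q ≤ lam / 2 * (p ⬝ᵥ p + q ⬝ᵥ q) := by
    intro p q
    have h1 := hup (p + q)
    have h2 := hdn (p - q)
    have e1 : (p + q) ⬝ᵥ A *ᵥ (p + q) =
        p ⬝ᵥ A *ᵥ p + p ⬝ᵥ A *ᵥ q + q ⬝ᵥ A *ᵥ p + q ⬝ᵥ A *ᵥ q := by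
      rw [Matrix.mulVec_add, dotProduct_add, add_dotProduct, add_dotProduct]
      ring
    have e2 : (p - q) ⬝ᵥ A *ᵥ (p - q) =
        p ⬝ᵥ A *ᵥ p - p ⬝ᵥ A *ᵥ q - q ⬝ᵥ A *ᵥ p + q ⬝ᵥ A *ᵥ q := by
      rw [Matrix.mulVec_sub, dotProduct_sub, sub_dotProduct, sub_dotProduct]
      ring
    have e3 : (p + q) ⬝ᵥ (p + q) = p ⬝ᵥ p + 2 * (p ⬝ᵥ q) + q ⬝ᵥ q := by
      rw [dotProduct_add, add_dotProduct, add_dotProduct,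
        dotProduct_comm q p]
      ring
    have e4 : (p - q) ⬝ᵥ (p - q) = p ⬝ᵥ p - 2 * (p ⬝ᵥ q) + q ⬝ᵥ q := by
      rw [dotProduct_sub, sub_dotProduct, sub_dotProduct,
        dotProduct_comm q p]
      ring
    have hsym : q ⬝ᵥ A *ᵥ p = p ⬝ᵥ A *ᵥ q := by
      rw [dot_eq, dot_eq, Finset.sum_comm]
      exact Finset.sum_congr rfl fun a _ => Finset.sum_congr rfl fun b _ => by
        rw [hAsym b a]; ring
    rw [e1, e3] at h1
    rw [e2, e4] at h2
    rw [hsym] at h1 h2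
    linarith
  have hEB : ∀ X Y : Finset V, X.Nonempty → Y.Nonempty →
      (eXY G X Y : ℝ) ≤ lam * Real.sqrt ((X.card : ℝ) * (Y.card : ℝ)) := by
    intro X Y hX hY
    have hXc : (0:ℝ) < X.card := by exact_mod_cast Finset.card_pos.2 hX
    have hYc : (0:ℝ) < Y.card := by exact_mod_cast Finset.card_pos.2 hY
    obtain ⟨sx, hsx⟩ : ∃ s, s = Real.sqrt (X.card : ℝ) := ⟨_, rfl⟩
    obtain ⟨sy, hsy⟩ : ∃ s, s = Real.sqrt (Y.card : ℝ) := ⟨_, rfl⟩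
    have hsxp : 0 < sx := hsx ▸ Real.sqrt_pos.2 hXc
    have hsyp : 0 < sy := hsy ▸ Real.sqrt_pos.2 hYc
    have hsx2 : sx ^ 2 = (X.card : ℝ) := hsx ▸ Real.sq_sqrt hXc.le
    have hsy2 : sy ^ 2 = (Y.card : ℝ) := hsy ▸ Real.sq_sqrt hYc.le
    obtain ⟨s, hs⟩ : ∃ u, u = Real.sqrt (sy / sx) := ⟨_, rfl⟩
    obtain ⟨t, ht⟩ : ∃ u, u = Real.sqrt (sx / sy) := ⟨_, rfl⟩
    have hs2 : s ^ 2 = sy / sx := hs ▸ Real.sq_sqrt (by positivity)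
    have ht2 : t ^ 2 = sx / sy := ht ▸ Real.sq_sqrt (by positivity)
    have hst : s * t = 1 := by
      rw [hs, ht, ← Real.sqrt_mul (by positivity)]
      rw [show sy / sx * (sx / sy) = 1 by field_simp]
      exact Real.sqrt_one
    obtain ⟨p, hp⟩ : ∃ p : V → ℝ, p = fun v => if v ∈ X then s else 0 := ⟨_, rfl⟩
    obtain ⟨q, hq⟩ : ∃ q : V → ℝ, q = fun v => if v ∈ Y then t else 0 := ⟨_, rfl⟩
    have hpp : p ⬝ᵥ p = s ^ 2 * X.card := by
      have h1 : ∀ v, p v * p v = if v ∈ X then s * s else 0 := by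
        intro v
        rw [hp]
        by_cases hv : v ∈ X <;> simp [hv]
      calc p ⬝ᵥ p = ∑ v, (if v ∈ X then s * s else 0) :=
            Finset.sum_congr rfl fun v _ => h1 v
        _ = ∑ v ∈ X, s * s := by
            rw [Finset.sum_ite_mem, Finset.univ_inter]
        _ = s ^ 2 * X.card := by
            rw [Finset.sum_const, nsmul_eq_mul]
            ring
    have hqq : q ⬝ᵥ q = t ^ 2 * Y.card := by
      have h1 : ∀ v, q v * q v = if v ∈ Y then t * t else 0 := by
        intro v
        rw [hq]
        by_cases hv : v ∈ Y <;> simp [hv]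
      calc q ⬝ᵥ q = ∑ v, (if v ∈ Y then t * t else 0) :=
            Finset.sum_congr rfl fun v _ => h1 v
        _ = ∑ v ∈ Y, t * t := by
            rw [Finset.sum_ite_mem, Finset.univ_inter]
        _ = t ^ 2 * Y.card := by
            rw [Finset.sum_const, nsmul_eq_mul]
            ring
    have hpq : p ⬝ᵥ A *ᵥ q = s * t * (eXY G X Y : ℝ) := by
      rw [dot_eq, eXY_eq]
      have houter : ∑ a, ∑ b, A a b * p a * q b = ∑ a ∈ X, ∑ b, A a b * p a * q b := by
        symm
        apply Finset.sum_subset (Finset.subset_univ X)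
        intro a _ haX
        apply Finset.sum_eq_zero
        intro b _
        rw [hp]
        simp [haX]
      rw [houter]
      have hinner : ∀ a ∈ X, ∑ b, A a b * p a * q b = ∑ b ∈ Y, A a b * p a * q b := by
        intro a _
        symm
        apply Finset.sum_subset (Finset.subset_univ Y)
        intro b _ hbY
        rw [hq]
        simp [hbY]
      rw [Finset.sum_congr rfl hinner]
      rw [Finset.mul_sum]
      refine Finset.sum_congr rfl fun a haX => ?_
      rw [Finset.mul_sum]
      refine Finset.sum_congr rfl fun b hbY => ?_
      rw [hp, hq]
      simp only [if_pos haX, if_pos hbY]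
      ring
    have hEeq : p ⬝ᵥ A *ᵥ q = (eXY G X Y : ℝ) := by rw [hpq, hst, one_mul]
    have hsum2 : p ⬝ᵥ p + q ⬝ᵥ q = 2 * (sx * sy) := by
      rw [hpp, hqq, hs2, ht2, ← hsx2, ← hsy2]
      field_simp
      ring
    have hb := hbil p q
    rw [hEeq, hsum2] at hb
    have hsqXY : Real.sqrt ((X.card : ℝ) * (Y.card : ℝ)) = sx * sy := by
      rw [hsx, hsy]
      exact Real.sqrt_mul hXc.le _
    rw [hsqXY]
    linarith [hb]
  constructor
  · rw [hMGdef, hlam_def]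
    apply csSup_le hMSne
    rintro r ⟨X, Y, hX, hY, rfl⟩
    have hXc : (0:ℝ) < X.card := by exact_mod_cast Finset.card_pos.2 hX
    have hYc : (0:ℝ) < Y.card := by exact_mod_cast Finset.card_pos.2 hY
    have hsp : 0 < Real.sqrt ((X.card : ℝ) * (Y.card : ℝ)) := Real.sqrt_pos.2 (by positivity)
    rw [div_le_iff₀ hsp]
    exact hEB X Y hX hY
  · rw [hlam_def]
    have huniv : U ∪ W = Finset.univ := by
      apply Finset.eq_univ_of_forall
      intro v
      rcases hcover v with h | h
      · exact Finset.mem_union_left _ h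
      · exact Finset.mem_union_right _ h
    have hcross : ∀ a b, a ∈ U → b ∈ U → A a b = 0 := by
      intro a b ha hb
      rw [hAdef]
      simp only [SimpleGraph.adjMatrix_apply]
      rw [if_neg]
      intro hadj
      rcases hbip a b hadj with ⟨_, hbW⟩ | ⟨haW, _⟩
      · exact (Finset.disjoint_left.mp hdisj hb) hbW
      · exact (Finset.disjoint_left.mp hdisj ha) haW
    have hcross' : ∀ a b, a ∈ W → b ∈ W → A a b = 0 := by
      intro a b ha hb
      rw [hAdef]
      simp only [SimpleGraph.adjMatrix_apply]
      rw [if_neg]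
      intro hadj
      rcases hbip a b hadj with ⟨haU, _⟩ | ⟨_, hbU⟩
      · exact (Finset.disjoint_left.mp hdisj haU) ha
      · exact (Finset.disjoint_left.mp hdisj hbU) hb
    have hsplit : ∀ F : V → ℝ, ∑ v, F v = ∑ v ∈ U, F v + ∑ v ∈ W, F v := by
      intro F
      rw [← Finset.sum_union hdisj, huniv]
    obtain ⟨S1, hS1⟩ : ∃ r, r = ∑ a ∈ U, ∑ b ∈ W, A a b * x a * x b := ⟨_, rfl⟩
    have hquadsplit : x ⬝ᵥ A *ᵥ x = 2 * S1 := by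
      rw [dot_eq, hsplit (fun a => ∑ b, A a b * x a * x b)]
      have hUpart : ∑ a ∈ U, ∑ b, A a b * x a * x b = S1 := by
        rw [hS1]
        refine Finset.sum_congr rfl fun a ha => ?_
        rw [hsplit (fun b => A a b * x a * x b)]
        have h0 : ∑ b ∈ U, A a b * x a * x b = 0 :=
          Finset.sum_eq_zero fun b hb => by rw [hcross a b ha hb]; ring
        rw [h0, zero_add]
      have hWpart : ∑ a ∈ W, ∑ b, A a b * x a * x b = S1 := by
        have h1 : ∑ a ∈ W, ∑ b, A a b * x a * x b = ∑ a ∈ W, ∑ b ∈ U, A a b * x a * x b := by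
          refine Finset.sum_congr rfl fun a ha => ?_
          rw [hsplit (fun b => A a b * x a * x b)]
          have h0 : ∑ b ∈ W, A a b * x a * x b = 0 :=
            Finset.sum_eq_zero fun b hb => by rw [hcross' a b ha hb]; ring
          rw [h0, add_zero]
        rw [h1, Finset.sum_comm, hS1]
        refine Finset.sum_congr rfl fun a _ => Finset.sum_congr rfl fun b _ => ?_
        rw [hAsym b a]
        ring
      rw [hUpart, hWpart]
      ring
    obtain ⟨nU, hnU⟩ : ∃ r, r = Real.sqrt (∑ v ∈ U, x v ^ 2) := ⟨_, rfl⟩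
    obtain ⟨nW, hnW⟩ : ∃ r, r = Real.sqrt (∑ v ∈ W, x v ^ 2) := ⟨_, rfl⟩
    have hnU0 : 0 ≤ nU := hnU ▸ Real.sqrt_nonneg _
    have hnW0 : 0 ≤ nW := hnW ▸ Real.sqrt_nonneg _
    have hxx : x ⬝ᵥ x = ∑ v, x v ^ 2 := by
      simp [dotProduct, pow_two]
    have hnorm : nU ^ 2 + nW ^ 2 = 1 := by
      rw [hnU, hnW, Real.sq_sqrt (Finset.sum_nonneg fun v _ => sq_nonneg _),
        Real.sq_sqrt (Finset.sum_nonneg fun v _ => sq_nonneg _),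
        ← hsplit (fun v => x v ^ 2), ← hxx]
      exact hx1
    have hC0 : 0 ≤ (1 / 2 : ℝ) * Real.log ((min U.card W.card : ℕ) : ℝ) + 2 := by
      have := Real.log_natCast_nonneg (min U.card W.card)
      linarith
    have hS1le : S1 ≤ MG G * ((1 / 2 : ℝ) * Real.log ((min U.card W.card : ℕ) : ℝ) + 2) * nU * nW := by
      rcases le_total U.card W.card with hUW | hWU
      · have hkey := key G hα0 hαe U W hU x x hx0 hx0
        have hnn : ((min U.card W.card : ℕ) : ℝ) = (U.card : ℝ) := by
          congr 1
          omega
        rw [hS1, hnn, hnU, hnW]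
        have heq : ∀ a b, G.adjMatrix ℝ a b = A a b := fun a b => by rw [hAdef]
        calc ∑ a ∈ U, ∑ b ∈ W, A a b * x a * x b
            = ∑ a ∈ U, ∑ b ∈ W, G.adjMatrix ℝ a b * x a * x b := by
              refine Finset.sum_congr rfl fun a _ => Finset.sum_congr rfl fun b _ => by rw [heq]
          _ ≤ MG G * ((1 / 2 : ℝ) * Real.log (U.card : ℝ) + 2) *
              Real.sqrt (∑ v ∈ U, x v ^ 2) * Real.sqrt (∑ v ∈ W, x v ^ 2) := hkey
      · have hkey := key G hα0 hαe W U hW x x hx0 hx0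
        have hnn : ((min U.card W.card : ℕ) : ℝ) = (W.card : ℝ) := by
          congr 1
          omega
        rw [hS1, hnn, hnU, hnW]
        calc ∑ a ∈ U, ∑ b ∈ W, A a b * x a * x b
            = ∑ a ∈ W, ∑ b ∈ U, G.adjMatrix ℝ a b * x a * x b := by
              rw [Finset.sum_comm]
              refine Finset.sum_congr rfl fun a _ => Finset.sum_congr rfl fun b _ => ?_
              rw [← hAdef, hAsym b a]
              ring
          _ ≤ MG G * ((1 / 2 : ℝ) * Real.log (W.card : ℝ) + 2) *
              Real.sqrt (∑ v ∈ W, x v ^ 2) * Real.sqrt (∑ v ∈ U, x v ^ 2) := hkey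
          _ = MG G * ((1 / 2 : ℝ) * Real.log (W.card : ℝ) + 2) *
              Real.sqrt (∑ v ∈ U, x v ^ 2) * Real.sqrt (∑ v ∈ W, x v ^ 2) := by ring
    have h2ab : 2 * (nU * nW) ≤ 1 := by nlinarith [sq_nonneg (nU - nW), hnorm]
    calc lam = x ⬝ᵥ A *ᵥ x := hxquad.symm
      _ = 2 * S1 := hquadsplit
      _ ≤ 2 * (MG G * ((1 / 2 : ℝ) * Real.log ((min U.card W.card : ℕ) : ℝ) + 2) * nU * nW) := by
          linarith [hS1le]
      _ = (MG G * ((1 / 2 : ℝ) * Real.log ((min U.card W.card : ℕ) : ℝ) + 2)) * (2 * (nU * nW)) := by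
          ring
      _ ≤ (MG G * ((1 / 2 : ℝ) * Real.log ((min U.card W.card : ℕ) : ℝ) + 2)) * 1 :=
          mul_le_mul_of_nonneg_left h2ab (mul_nonneg hα0 hC0)
      _ = ((1 / 2 : ℝ) * Real.log ((min U.card W.card : ℕ) : ℝ) + 2) * MG G := by ring
end

section
/- Let n ≥ 1 be an integer. For any vector z ∈ ℝⁿ with non-negative coordinates, there exists a non-zero vector δ ∈ {0,1}ⁿ such that ⟨z, δ⟩ ≥ (2/√(log n + 4))·‖z‖·‖δ‖, where ⟨·,·⟩ is the standard inner product and ‖·‖ is the Euclidean norm on ℝⁿ. -/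
open Finset Real
open scoped RealInnerProductSpace



private lemma pade {x : ℝ} (hx : 1 ≤ x) : 2*(x-1)/(x+1) ≤ Real.log x := by
  have key : ∀ y ∈ Set.Ici (1:ℝ), ∀ z ∈ Set.Ici (1:ℝ), y ≤ z →
      Real.log y - 2*(y-1)/(y+1) ≤ Real.log z - 2*(z-1)/(z+1) := by
    intro y hy z hz hyz
    have H : MonotoneOn (fun x => Real.log x - 2*(x-1)/(x+1)) (Set.Ici (1:ℝ)) := by
      have hderiv : ∀ x ∈ interior (Set.Ici (1:ℝ)),
          HasDerivAt (fun x => Real.log x - 2*(x-1)/(x+1)) (1/x - 4/(x+1)^2) x := by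
        intro x hx
        rw [interior_Ici] at hx
        have hx0 : (0:ℝ) < x := lt_trans one_pos hx
        have h1 : HasDerivAt Real.log (1/x) x := by
          simpa [one_div] using Real.hasDerivAt_log (ne_of_gt hx0)
        have h2 : HasDerivAt (fun x : ℝ => 2*(x-1)/(x+1)) (4/(x+1)^2) x := by
          have hu : HasDerivAt (fun x : ℝ => 2*(x-1)) 2 x := by
            simpa using ((hasDerivAt_id x).sub_const 1).const_mul 2
          have hv : HasDerivAt (fun x : ℝ => x+1) 1 x := (hasDerivAt_id x).add_const 1
          have hne : x + 1 ≠ 0 := by positivity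
          have := hu.div hv hne
          exact this.congr_deriv (by ring)
        exact h1.sub h2
      apply monotoneOn_of_deriv_nonneg (convex_Ici 1)
      · exact continuousOn_of_forall_continuousAt (fun x hx => by
          have hx0 : (0:ℝ) < x := lt_of_lt_of_le one_pos hx
          exact ((Real.continuousAt_log (ne_of_gt hx0)).sub
            (((continuous_const.mul (continuous_id.sub continuous_const)).continuousAt).div
              ((continuous_id.add continuous_const).continuousAt) (by positivity))))
      · intro x hx
        exact ((hderiv x hx).differentiableAt).differentiableWithinAt
      · intro x hx
        rw [(hderiv x hx).deriv]
        rw [interior_Ici] at hx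
        have hx0 : (0:ℝ) < x := lt_trans one_pos hx
        have h4 : 4*x ≤ (x+1)^2 := by nlinarith [sq_nonneg (x-1)]
        have : 4/(x+1)^2 ≤ 1/x := by
          rw [div_le_div_iff₀ (by positivity) hx0]
          nlinarith
        linarith
    exact H hy hz hyz
  have := key 1 (by norm_num) x hx hx
  simp at this
  linarith


private lemma sqrt_step {k : ℕ} (hk : 1 ≤ k) :
    (Real.sqrt (k+1) - Real.sqrt k)^2 ≤ (Real.log (k+1) - Real.log k)/4 := by
  set a := Real.sqrt k with ha
  set b := Real.sqrt (k+1) with hb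
  have hk0 : (1:ℝ) ≤ (k:ℝ) := by exact_mod_cast hk
  have ha1 : 1 ≤ a := by
    rw [ha, show (1:ℝ) = Real.sqrt 1 by simp]
    exact Real.sqrt_le_sqrt hk0
  have ha0 : 0 < a := lt_of_lt_of_le one_pos ha1
  have hab : a ≤ b := Real.sqrt_le_sqrt (by push_cast; linarith)
  have hb0 : 0 < b := lt_of_lt_of_le ha0 hab
  have hsq : b^2 - a^2 = 1 := by
    rw [ha, hb, Real.sq_sqrt (by positivity), Real.sq_sqrt (by positivity)]
    push_cast; ring
  have hr1 : 1 ≤ b/a := (one_le_div ha0).2 hab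
  have hlog : Real.log (b/a) = (Real.log (k+1) - Real.log k)/2 := by
    rw [Real.log_div (ne_of_gt hb0) (ne_of_gt ha0), hb, ha,
      Real.log_sqrt (by positivity), Real.log_sqrt (by positivity)]
    push_cast; ring
  have hfrac : 2*((b/a)-1)/((b/a)+1) = 2*(b-a)/(b+a) := by
    rw [div_eq_div_iff (by positivity) (by positivity)]
    field_simp
  have hpade := pade hr1
  rw [hfrac, hlog] at hpade
  have hba : (b-a)*(b+a) = 1 := by nlinarith
  have hinv : b - a = 1/(b+a) := by
    rw [eq_div_iff (by positivity)]; exact hba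
  have h2 : (b-a)^2 = (b-a)/(b+a) := by
    rw [sq, hinv]; ring
  rw [h2]
  have : 2*(b-a)/(b+a) ≤ (Real.log (k+1) - Real.log k)/2 := hpade
  have h3 : (b-a)/(b+a) = (2*(b-a)/(b+a))/2 := by ring
  rw [h3]
  linarith

private lemma sum_sqrt_sq {n : ℕ} (hn : 1 ≤ n) :
    ∑ j ∈ range n, (Real.sqrt (j+1) - Real.sqrt j)^2 ≤ 1 + Real.log n / 4 := by
  induction n with
  | zero => omega
  | succ m ih =>
    rcases Nat.eq_or_lt_of_le hn with h1 | h1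
    · simp [← h1]
    · have hm : 1 ≤ m := by omega
      have := ih hm
      rw [sum_range_succ]
      have := sqrt_step hm
      push_cast
      push_cast at this ⊢
      linarith


private lemma abel_sq (n : ℕ) (W T : ℕ → ℝ) (hW0 : ∀ k, 0 ≤ W k) (hT0 : ∀ k, 0 ≤ T k)
    (hWm : ∀ k, W (k+1) ≤ W k) (hTm : ∀ k, T (k+1) ≤ T k)
    (hS : ∀ k ≤ n, ∑ j ∈ range k, W j ≤ ∑ j ∈ range k, T j) :
    ∑ j ∈ range n, (W j)^2 ≤ ∑ j ∈ range n, (T j)^2 := by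
  have key : ∑ j ∈ range n, ((W j)^2 - (T j)^2) ≤ 0 := by
    have hrw : ∀ j, (W j)^2 - (T j)^2 = (W j + T j) • (W j - T j) := by
      intro j; simp [smul_eq_mul]; ring
    simp_rw [hrw]
    rw [Finset.sum_range_by_parts (fun j => W j + T j) (fun j => W j - T j) n]
    have hG : ∀ k ≤ n, ∑ j ∈ range k, (W j - T j) ≤ 0 := by
      intro k hk
      rw [Finset.sum_sub_distrib]
      linarith [hS k hk]
    have h1 : (W (n-1) + T (n-1)) • (∑ j ∈ range n, (W j - T j)) ≤ 0 := by
      rw [smul_eq_mul]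
      exact mul_nonpos_of_nonneg_of_nonpos (by linarith [hW0 (n-1), hT0 (n-1)])
        (hG n le_rfl)
    have h2 : 0 ≤ ∑ i ∈ range (n-1),
        ((W (i+1) + T (i+1)) - (W i + T i)) • (∑ j ∈ range (i+1), (W j - T j)) := by
      apply Finset.sum_nonneg
      intro i hi
      rw [smul_eq_mul]
      have ha : (W (i+1) + T (i+1)) - (W i + T i) ≤ 0 := by linarith [hWm i, hTm i]
      have hb : ∑ j ∈ range (i+1), (W j - T j) ≤ 0 := by
        apply hG
        have := Finset.mem_range.1 hi
        omega
      nlinarith [ha, hb]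
    linarith
  have := Finset.sum_sub_distrib (s := range n) (f := fun j => (W j)^2) (g := fun j => (T j)^2)
  linarith [key, this ▸ key]

/-- Lemma 4: for any `z ∈ ℝⁿ` with non-negative coordinates there is a non-zero
`δ ∈ {0,1}ⁿ` with `⟨z,δ⟩ ≥ (2/√(log n + 4))·‖z‖·‖δ‖`. -/
theorem statement12 (n : ℕ) (hn : 1 ≤ n) (z : EuclideanSpace ℝ (Fin n))
    (hz : ∀ i, 0 ≤ z i) :
    ∃ δ : EuclideanSpace ℝ (Fin n), δ ≠ 0 ∧ (∀ i, δ i = 0 ∨ δ i = 1) ∧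
      ⟪z, δ⟫ ≥ (2 / Real.sqrt (Real.log n + 4)) * (‖z‖ * ‖δ‖) := by
  classical
  have hLpos : (0:ℝ) < Real.log n + 4 := by
    have : (0:ℝ) ≤ Real.log n := Real.log_nonneg (by exact_mod_cast hn)
    linarith
  have hsL : 0 < Real.sqrt (Real.log n + 4) := Real.sqrt_pos.2 hLpos
  set σ : Equiv.Perm (Fin n) := Tuple.sort (fun i => -z i) with hσ
  have hmono : Monotone ((fun i => -z i) ∘ σ) := Tuple.monotone_sort _
  set W : ℕ → ℝ := fun k => if h : k < n then z (σ ⟨k, h⟩) else 0 with hWdef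
  have hW0 : ∀ k, 0 ≤ W k := by
    intro k
    by_cases h : k < n <;> simp [hWdef, h] <;> try exact hz _
  have hWm : ∀ k, W (k+1) ≤ W k := by
    intro k
    by_cases h1 : k + 1 < n
    · have h0 : k < n := by omega
      simp only [hWdef, dif_pos h1, dif_pos h0]
      have hle : (⟨k, h0⟩ : Fin n) ≤ ⟨k+1, h1⟩ := by simp [Fin.le_def]
      have := hmono hle
      simp only [Function.comp_apply] at this
      linarith
    · simp only [hWdef, dif_neg h1]
      exact hW0 k
  set S : ℕ → ℝ := fun k => ∑ j ∈ range k, W j with hSdef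
  have hS0 : ∀ k, 0 ≤ S k := fun k => Finset.sum_nonneg (fun j _ => hW0 j)
  obtain ⟨K, hKmem, hKmax⟩ := Finset.exists_max_image (Finset.Icc 1 n)
    (fun k => S k / Real.sqrt k) ⟨1, by simp [hn]⟩
  have hK1 : 1 ≤ K := (Finset.mem_Icc.1 hKmem).1
  have hKn : K ≤ n := (Finset.mem_Icc.1 hKmem).2
  have hsK : 0 < Real.sqrt K := Real.sqrt_pos.2 (by exact_mod_cast hK1)
  set M : ℝ := S K / Real.sqrt K with hMdef
  have hM0 : 0 ≤ M := div_nonneg (hS0 K) hsK.le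
  have hSM : ∀ k, k ≤ n → S k ≤ M * Real.sqrt k := by
    intro k hk
    rcases Nat.eq_zero_or_pos k with rfl | hk1
    · simp [hSdef]
    · have hmax := hKmax k (Finset.mem_Icc.2 ⟨hk1, hk⟩)
      have hsk : 0 < Real.sqrt k := Real.sqrt_pos.2 (by exact_mod_cast hk1)
      rw [div_le_div_iff₀ hsk hsK] at hmax
      rw [hMdef, div_mul_eq_mul_div, le_div_iff₀ hsK]
      linarith
  have hSK : S K = M * Real.sqrt K := by
    rw [hMdef]; field_simp
  set T : ℕ → ℝ := fun j => M * Real.sqrt (j+1) - M * Real.sqrt j with hTdef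
  have hsqm : ∀ a b : ℕ, a ≤ b → Real.sqrt a ≤ Real.sqrt b := by
    intro a b h; exact Real.sqrt_le_sqrt (by exact_mod_cast h)
  have hT0 : ∀ k, 0 ≤ T k := by
    intro k
    simp only [hTdef, sub_nonneg]
    have : Real.sqrt k ≤ Real.sqrt (k+1) := by
      have := hsqm k (k+1) (Nat.le_succ k); push_cast at this ⊢; linarith
    exact mul_le_mul_of_nonneg_left this hM0
  have hTm : ∀ k, T (k+1) ≤ T k := by
    intro k
    simp only [hTdef]
    have s0 : Real.sqrt ((k:ℝ)) ^ 2 = k := Real.sq_sqrt (by positivity)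
    have s1 : Real.sqrt ((k:ℝ)+1) ^ 2 = (k:ℝ)+1 := Real.sq_sqrt (by positivity)
    have s2 : Real.sqrt ((k:ℝ)+1+1) ^ 2 = (k:ℝ)+2 := by
      rw [Real.sq_sqrt (by positivity)]; ring
    have hmul : Real.sqrt ((k:ℝ)) * Real.sqrt ((k:ℝ)+1+1) ≤ (k:ℝ)+1 := by
      rw [← Real.sqrt_mul (by positivity)]
      have : Real.sqrt ((k:ℝ) * ((k:ℝ)+1+1)) ≤ Real.sqrt (((k:ℝ)+1)^2) := by
        apply Real.sqrt_le_sqrt; nlinarith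
      rw [Real.sqrt_sq (by positivity)] at this
      exact this
    have e1 : Real.sqrt ((k:ℝ)+1+1) + Real.sqrt ((k:ℝ)) ≤ 2 * Real.sqrt ((k:ℝ)+1) := by
      nlinarith [Real.sqrt_nonneg ((k:ℝ)), Real.sqrt_nonneg ((k:ℝ)+1),
        Real.sqrt_nonneg ((k:ℝ)+1+1)]
    push_cast
    nlinarith [mul_le_mul_of_nonneg_left e1 hM0]
  have hTsum : ∀ k, ∑ j ∈ range k, T j = M * Real.sqrt k := by
    intro k
    have h := Finset.sum_range_sub (f := fun j => M * Real.sqrt j) k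
    have : ∀ j ∈ range k, T j = M * Real.sqrt ((j:ℕ)+1) - M * Real.sqrt j := by
      intro j _; simp [hTdef]
    rw [Finset.sum_congr rfl this]
    push_cast
    push_cast at h
    rw [h]
    simp
  have habel := abel_sq n W T hW0 hT0 hWm hTm (by
    intro k hk
    rw [hTsum k]
    exact hSM k hk)
  have hQ : ∑ j ∈ range n, (W j)^2 ≤ M^2 * ((Real.log n + 4)/4) := by
    have h1 : ∑ j ∈ range n, (T j)^2
        = M^2 * ∑ j ∈ range n, (Real.sqrt (j+1) - Real.sqrt j)^2 := by
      rw [Finset.mul_sum]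
      apply Finset.sum_congr rfl
      intro j _
      simp only [hTdef]
      ring
    have h2 := sum_sqrt_sq hn
    calc ∑ j ∈ range n, (W j)^2 ≤ ∑ j ∈ range n, (T j)^2 := habel
      _ = M^2 * ∑ j ∈ range n, (Real.sqrt (j+1) - Real.sqrt j)^2 := h1
      _ ≤ M^2 * (1 + Real.log n / 4) := mul_le_mul_of_nonneg_left h2 (sq_nonneg M)
      _ = M^2 * ((Real.log n + 4)/4) := by ring
  set δ : EuclideanSpace ℝ (Fin n) := WithLp.toLp 2 (fun j => if ((σ.symm j : ℕ) < K) then (1:ℝ) else 0)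
    with hδdef
  have hδσ : ∀ i : Fin n, δ (σ i) = if ((i:ℕ) < K) then 1 else 0 := by
    intro i; simp [hδdef]
  have hWz : ∀ i : Fin n, W (i:ℕ) = z (σ i) := by
    intro i; simp [hWdef, i.isLt]
  refine ⟨δ, ?_, ?_, ?_⟩
  · intro hδ0
    have h0n : 0 < n := hn
    have h1 : δ (σ ⟨0, h0n⟩) = 1 := by
      rw [hδσ]
      simp only [Fin.val_mk, if_pos (by omega : 0 < K)]
    rw [hδ0] at h1
    simp at h1
  · intro i
    by_cases h : ((σ.symm i : ℕ) < K) <;> simp [hδdef, h]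
  · have hinner : ⟪z, δ⟫ = S K := by
      rw [PiLp.inner_apply]
      simp only [RCLike.inner_apply, starRingEnd_apply, star_trivial]
      rw [Finset.sum_congr rfl (fun j _ => mul_comm (δ j) (z j))]
      rw [← Equiv.sum_comp σ (fun j => z j * δ j)]
      have hterm : ∀ i : Fin n, z (σ i) * δ (σ i)
          = (fun j : ℕ => if j < K then W j else 0) (i:ℕ) := by
        intro i
        rw [hδσ]
        by_cases h : (i:ℕ) < K
        · simp [h, hWz i]
        · simp [h]
      rw [Finset.sum_congr rfl (fun i _ => hterm i)]
      rw [Fin.sum_univ_eq_sum_range (fun j : ℕ => if j < K then W j else 0) n]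
      have hsplit : ∑ j ∈ range n, (if j < K then W j else 0) = ∑ j ∈ range K, W j := by
        rw [← Finset.sum_filter]
        apply Finset.sum_congr _ (fun _ _ => rfl)
        ext j
        simp only [Finset.mem_filter, Finset.mem_range]
        omega
      rw [hsplit]
    have hnormδ : ‖δ‖ = Real.sqrt K := by
      rw [EuclideanSpace.norm_eq]
      congr 1
      rw [← Equiv.sum_comp σ (fun j => ‖δ j‖^2)]
      have hterm : ∀ i : Fin n, ‖δ (σ i)‖^2 = (fun j : ℕ => if j < K then (1:ℝ) else 0) (i:ℕ) := by
        intro i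
        rw [hδσ]
        by_cases h : (i:ℕ) < K <;> simp [h]
      rw [Finset.sum_congr rfl (fun i _ => hterm i)]
      rw [Fin.sum_univ_eq_sum_range (fun j : ℕ => if j < K then (1:ℝ) else 0) n]
      have hsplit : ∑ j ∈ range n, (if j < K then (1:ℝ) else 0) = ∑ j ∈ range K, (1:ℝ) := by
        rw [← Finset.sum_filter]
        apply Finset.sum_congr _ (fun _ _ => rfl)
        ext j
        simp only [Finset.mem_filter, Finset.mem_range]
        omega
      rw [hsplit]
      simp
    have hnormz : ‖z‖^2 = ∑ j ∈ range n, (W j)^2 := by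
      have h1 : ‖z‖^2 = ∑ i : Fin n, (z i)^2 := by
        rw [EuclideanSpace.norm_eq, Real.sq_sqrt (Finset.sum_nonneg (fun i _ => sq_nonneg _))]
        simp [Real.norm_eq_abs, sq_abs]
      rw [h1, ← Equiv.sum_comp σ (fun j => (z j)^2)]
      have hterm : ∀ i : Fin n, (z (σ i))^2 = (fun j : ℕ => (W j)^2) (i:ℕ) := by
        intro i; rw [← hWz i]
      rw [Finset.sum_congr rfl (fun i _ => hterm i)]
      rw [Fin.sum_univ_eq_sum_range (fun j : ℕ => (W j)^2) n]
    have h2norm : 2 * ‖z‖ ≤ M * Real.sqrt (Real.log n + 4) := by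
      have hz2 : ‖z‖^2 ≤ M^2 * ((Real.log n + 4)/4) := by rw [hnormz]; exact hQ
      nlinarith [norm_nonneg z, mul_nonneg hM0 (Real.sqrt_nonneg (Real.log n + 4)),
        Real.sq_sqrt hLpos.le]
    rw [ge_iff_le, hinner, hnormδ, hSK]
    rw [div_mul_eq_mul_div, div_le_iff₀ hsL]
    nlinarith [mul_le_mul_of_nonneg_right h2norm (Real.sqrt_nonneg (K:ℝ))]
end

section
/- Let n, Δ ≥ 1 be integers. For any vector z ∈ ℝⁿ all of whose coordinates are integers in the interval [0, Δ], there exists a non-zero vector δ ∈ {0,1}ⁿ such that ⟨z, δ⟩ ≥ (1/√(log Δ + 1))·‖z‖·‖δ‖. -/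
open scoped RealInnerProductSpace
open Finset

-- sum of odd numbers
private lemma sum_odd' (m : ℕ) : ∑ s ∈ Finset.Icc 1 m, (2*s - 1) = m^2 := by
  induction m with
  | zero => simp
  | succ k ih =>
      rw [Finset.sum_Icc_succ_top (by omega), ih]
      have h : (k+1)^2 = k^2 + 2*k + 1 := by ring
      omega

private lemma sum_odd_ind (Δ m : ℕ) (hm : m ≤ Δ) :
    ∑ s ∈ Finset.Icc 1 Δ, (2*s - 1) * (if s ≤ m then 1 else 0) = m^2 := by
  have h1 : ∑ s ∈ Finset.Icc 1 Δ, (2*s - 1) * (if s ≤ m then 1 else 0)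
      = ∑ s ∈ (Finset.Icc 1 Δ).filter (· ≤ m), (2*s-1) := by
    rw [Finset.sum_filter]
    exact Finset.sum_congr rfl (fun s _ => by split <;> simp
)
  have h2 : (Finset.Icc 1 Δ).filter (· ≤ m) = Finset.Icc 1 m := by
    ext s; simp only [Finset.mem_filter, Finset.mem_Icc]; omega
  rw [h1, h2, sum_odd' m]

-- harmonic bound
private lemma harm_le (m : ℕ) : ∑ t ∈ Finset.Ico 1 m, (1/(t:ℝ)) ≤ 2 * Real.log m := by
  induction m with
  | zero => simp
  | succ k ih =>
      rcases Nat.eq_zero_or_pos k with hk | hk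
      · subst hk; simp
      · rw [Finset.sum_Ico_succ_top hk]
        have hk1 : (0:ℝ) < k := by exact_mod_cast hk
        have hlog : Real.log k - Real.log (k+1) ≤ (k:ℝ)/(k+1) - 1 := by
          have h := Real.log_le_sub_one_of_pos (x := (k:ℝ)/(k+1)) (by positivity)
          rwa [Real.log_div (by positivity) (by positivity)] at h
        have he : (k:ℝ)/(k+1) - 1 = -(1/(k+1)) := by field_simp; ring
        have hd : (1:ℝ)/(k+1) ≤ Real.log (k+1) - Real.log k := by
          rw [he] at hlog; linarith
        have hq : (1:ℝ)/k ≤ 2*(1/(k+1)) := by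
          have h1 : (1:ℝ) ≤ k := by exact_mod_cast hk
          have h2 : (0:ℝ) < (k:ℝ)+1 := by positivity
          have h3 : 2*(1/((k:ℝ)+1)) = 2/((k:ℝ)+1) := by ring
          rw [h3, div_le_div_iff₀ hk1 h2]
          nlinarith
        push_cast
        linarith

private lemma cnt1 {n Δ : ℕ} (f : Fin n → ℕ) (hf : ∀ i, f i ≤ Δ) :
    ∑ i, (f i)^2
      = ∑ s ∈ Finset.Icc 1 Δ, (2*s-1) * (Finset.univ.filter (fun i => s ≤ f i)).card := by
  have h : ∀ s, (Finset.univ.filter (fun i => s ≤ f i)).card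
      = ∑ i, (if s ≤ f i then 1 else 0) := fun s => Finset.card_filter _ _
  simp_rw [h, Finset.mul_sum]
  rw [Finset.sum_comm]
  exact Finset.sum_congr rfl fun i _ => (sum_odd_ind Δ (f i) (hf i)).symm

private lemma cnt2 {n Δ : ℕ} (f : Fin n → ℕ) (hf : ∀ i, f i ≤ Δ) (t : ℕ) :
    ∑ i ∈ Finset.univ.filter (fun i => t ≤ f i), f i
      = t * (Finset.univ.filter (fun i => t ≤ f i)).card
        + ∑ s ∈ Finset.Ioc t Δ, (Finset.univ.filter (fun i => s ≤ f i)).card := by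
  have h1 : ∀ i ∈ Finset.univ.filter (fun i => t ≤ f i), f i = t + (f i - t) := by
    intro i hi; simp only [Finset.mem_filter] at hi; omega
  rw [Finset.sum_congr rfl h1, Finset.sum_add_distrib, Finset.sum_const, smul_eq_mul,
    mul_comm]
  congr 1
  have h2 : ∀ i ∈ Finset.univ.filter (fun i => t ≤ f i),
      f i - t = ∑ s ∈ Finset.Ioc t Δ, (if s ≤ f i then 1 else 0) := by
    intro i _
    rw [← Finset.card_filter]
    have he : (Finset.Ioc t Δ).filter (· ≤ f i) = Finset.Ioc t (f i) := by
      ext s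
      simp only [Finset.mem_filter, Finset.mem_Ioc]
      have := hf i; omega
    rw [he, Nat.card_Ioc]
  rw [Finset.sum_congr rfl h2, Finset.sum_comm]
  refine Finset.sum_congr rfl fun s hs => ?_
  simp only [Finset.mem_Ioc] at hs
  rw [← Finset.card_filter, Finset.filter_filter]
  congr 1
  ext i
  simp only [Finset.mem_filter, Finset.mem_univ, true_and]
  omega

private lemma cnt3b (Δ : ℕ) (a : ℕ → ℕ) :
    ∑ t ∈ Finset.Ico 1 Δ, ∑ s ∈ Finset.Ioc t Δ, a s
      = ∑ s ∈ Finset.Icc 1 Δ, (s-1) * a s := by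
  have h1 : ∀ t ∈ Finset.Ico 1 Δ, ∑ s ∈ Finset.Ioc t Δ, a s
      = ∑ s ∈ Finset.Icc 1 Δ, (if t < s then a s else 0) := by
    intro t ht
    simp only [Finset.mem_Ico] at ht
    rw [← Finset.sum_filter]
    congr 1
    ext s; simp only [Finset.mem_Ioc, Finset.mem_filter, Finset.mem_Icc]; omega
  rw [Finset.sum_congr rfl h1, Finset.sum_comm]
  refine Finset.sum_congr rfl fun s hs => ?_
  simp only [Finset.mem_Icc] at hs
  rw [← Finset.sum_filter]
  have he : (Finset.Ico 1 Δ).filter (· < s) = Finset.Ico 1 s := by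
    ext t; simp only [Finset.mem_filter, Finset.mem_Ico]; omega
  rw [he, Finset.sum_const, Nat.card_Ico, smul_eq_mul]

private lemma cnt3 (Δ : ℕ) (a : ℕ → ℕ) :
    ∑ s ∈ Finset.Icc 1 Δ, (2*s-1) * a s
      = (∑ s ∈ Finset.Icc 1 Δ, a s)
        + 2 * ∑ t ∈ Finset.Ico 1 Δ, ∑ s ∈ Finset.Ioc t Δ, a s := by
  rw [cnt3b]
  rw [Finset.mul_sum, ← Finset.sum_add_distrib]
  refine Finset.sum_congr rfl fun s hs => ?_
  simp only [Finset.mem_Icc] at hs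
  have h : 2*s-1 = 1 + 2*(s-1) := by omega
  rw [h, add_mul, one_mul, mul_assoc]

/-- Lemma 5: for any integer vector `z ∈ [0,Δ]ⁿ` there is a non-zero `δ ∈ {0,1}ⁿ` with
`⟨z,δ⟩ ≥ (1/√(log Δ + 1))·‖z‖·‖δ‖`. -/
theorem statement13 (n Δ : ℕ) (hn : 1 ≤ n) (hΔ : 1 ≤ Δ)
    (z : EuclideanSpace ℝ (Fin n)) (hz : ∀ i, ∃ m : ℕ, m ≤ Δ ∧ z i = m) :
    ∃ δ : EuclideanSpace ℝ (Fin n), δ ≠ 0 ∧ (∀ i, δ i = 0 ∨ δ i = 1) ∧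
      ⟪z, δ⟫ ≥ (1 / Real.sqrt (Real.log Δ + 1)) * (‖z‖ * ‖δ‖) := by
  classical
  choose f hfle hfz using hz
  by_cases hz0 : z = 0
  · refine ⟨(WithLp.toLp 2 (fun _ => 1) : EuclideanSpace ℝ (Fin n)), ?_, fun i => Or.inr rfl, ?_⟩
    · intro h
      have := congrArg (fun v : EuclideanSpace ℝ (Fin n) => v ⟨0, hn⟩) h
      simp at this
    · simp [hz0]
  · by_contra hcon
    push_neg at hcon
    set c : ℝ := 1 / Real.sqrt (Real.log Δ + 1) with hc
    have hΔ1 : (1:ℝ) ≤ (Δ:ℝ) := by exact_mod_cast hΔ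
    have hlog0 : 0 ≤ Real.log Δ := Real.log_nonneg hΔ1
    have hlogpos : 0 < Real.log Δ + 1 := by linarith
    have hc2 : c^2 = 1 / (Real.log Δ + 1) := by
      rw [hc, div_pow, one_pow, Real.sq_sqrt hlogpos.le]
    have hznorm : 0 < ‖z‖ := norm_pos_iff.mpr hz0
    have hzpos : 0 < ‖z‖^2 := by positivity
    set C : ℝ := ‖z‖^2 / (Real.log Δ + 1) with hC
    have hCpos : 0 < C := div_pos hzpos hlogpos
    set a : ℕ → ℕ := fun s => (Finset.univ.filter (fun i => s ≤ f i)).card with ha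
    set S : ℕ → ℕ := fun t => ∑ i ∈ Finset.univ.filter (fun i => t ≤ f i), f i with hSdef
    -- norm of z
    have hN : ‖z‖^2 = ((∑ i, (f i)^2 : ℕ) : ℝ) := by
      rw [EuclideanSpace.norm_eq, Real.sq_sqrt (by positivity)]
      push_cast
      refine Finset.sum_congr rfl fun i _ => ?_
      rw [hfz i]
      simp
    -- key threshold inequality
    have key : ∀ t : ℕ, (Finset.univ.filter (fun i => t ≤ f i)).Nonempty →
        ((S t : ℝ))^2 < C * (a t) := by
      intro t ht
      set δ : EuclideanSpace ℝ (Fin n) := WithLp.toLp 2 (fun i => if t ≤ f i then 1 else 0) with hδ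
      have hδ01 : ∀ i, δ i = 0 ∨ δ i = 1 := fun i => by
        by_cases h : t ≤ f i <;> simp [hδ, h]
      have hδne : δ ≠ 0 := by
        obtain ⟨i, hi⟩ := ht
        simp only [Finset.mem_filter, Finset.mem_univ, true_and] at hi
        intro h
        have h2 : δ i = 0 := by rw [h]; rfl
        simp [hδ, hi] at h2
      have hinner : ⟪z, δ⟫ = (S t : ℝ) := by
        rw [PiLp.inner_apply]
        simp only [RCLike.inner_apply, conj_trivial, hδ, hfz, mul_ite, mul_one, mul_zero, ite_mul, one_mul, zero_mul]
        rw [← Finset.sum_filter, hSdef]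
        push_cast
        try rfl
      have hnormδ : ‖δ‖ = Real.sqrt (a t) := by
        rw [EuclideanSpace.norm_eq]
        congr 1
        have h1 : ∀ i, ‖δ i‖^2 = if t ≤ f i then (1:ℝ) else 0 := fun i => by
          by_cases h : t ≤ f i <;> simp [hδ, h]
        rw [Finset.sum_congr rfl (fun i _ => h1 i), Finset.sum_boole]
        try simp [ha]
      have hlt := hcon δ hδne hδ01
      rw [hinner, hnormδ] at hlt
      have hS0 : (0:ℝ) ≤ (S t : ℝ) := Nat.cast_nonneg _
      have hsq : ((S t:ℝ))^2 < (c * (‖z‖ * Real.sqrt (a t)))^2 :=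
        pow_lt_pow_left₀ hlt hS0 two_ne_zero
      have hexp : (c * (‖z‖ * Real.sqrt (a t)))^2 = c^2 * ‖z‖^2 * (Real.sqrt (a t))^2 := by
        ring
      rw [hexp, Real.sq_sqrt (Nat.cast_nonneg _), hc2] at hsq
      calc ((S t:ℝ))^2 < 1/(Real.log Δ + 1) * ‖z‖^2 * (a t) := hsq
        _ = C * a t := by rw [hC]; ring
    -- A 1 nonempty
    have hA1 : (Finset.univ.filter (fun i => 1 ≤ f i)).Nonempty := by
      by_contra h
      apply hz0
      rw [Finset.not_nonempty_iff_eq_empty, Finset.filter_eq_empty_iff] at h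
      ext i
      have h2 : f i = 0 := by have := h (Finset.mem_univ i); omega
      show z i = 0
      rw [hfz i, h2]; simp
    -- S 1 < C
    have hS1 : (S 1 : ℝ) < C := by
      have hkey1 := key 1 hA1
      have ha1S : a 1 ≤ S 1 := by
        rw [ha, hSdef]
        calc (Finset.univ.filter (fun i => 1 ≤ f i)).card
            = ∑ _i ∈ Finset.univ.filter (fun i => 1 ≤ f i), 1 := by
              rw [Finset.sum_const, smul_eq_mul, mul_one]
          _ ≤ ∑ i ∈ Finset.univ.filter (fun i => 1 ≤ f i), f i :=
              Finset.sum_le_sum (fun i hi => by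
                simp only [Finset.mem_filter] at hi; omega)
      have ha1pos : 0 < a 1 := Finset.card_pos.mpr hA1
      have hS1pos : (0:ℝ) < (S 1 : ℝ) := by
        have : 0 < S 1 := lt_of_lt_of_le ha1pos ha1S
        exact_mod_cast this
      have h2 : ((S 1:ℝ))^2 < C * (S 1) := by
        refine lt_of_lt_of_le hkey1 ?_
        have : ((a 1 : ℕ):ℝ) ≤ ((S 1 : ℕ):ℝ) := by exact_mod_cast ha1S
        exact mul_le_mul_of_nonneg_left this hCpos.le
      nlinarith
    -- R t ≤ C/(4t)
    have hR : ∀ t ∈ Finset.Ico 1 Δ,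
        ((∑ s ∈ Finset.Ioc t Δ, a s : ℕ) : ℝ) ≤ C/(4*t) := by
      intro t ht
      simp only [Finset.mem_Ico] at ht
      have htpos : (0:ℝ) < (t:ℝ) := by exact_mod_cast ht.1
      by_cases hA : (Finset.univ.filter (fun i => t ≤ f i)).Nonempty
      · have hkt := key t hA
        have hSt := cnt2 f hfle t
        have hcast : (S t : ℝ) = t * (a t) + ((∑ s ∈ Finset.Ioc t Δ, a s : ℕ):ℝ) := by
          rw [hSdef, ha]
          exact_mod_cast congrArg (Nat.cast : ℕ → ℝ) hSt
        set R : ℝ := ((∑ s ∈ Finset.Ioc t Δ, a s : ℕ):ℝ) with hRdef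
        have hR0 : 0 ≤ R := Nat.cast_nonneg _
        have hapos : (0:ℝ) < (a t : ℝ) := by
          exact_mod_cast Finset.card_pos.mpr hA
        rw [hcast] at hkt
        have h4 : 4*((t:ℝ)*(a t))*R ≤ ((t:ℝ)*(a t)+R)^2 := by nlinarith [sq_nonneg ((t:ℝ)*(a t) - R)]
        have h5 : (4*(t:ℝ)*R) * (a t) < C * (a t) := by nlinarith
        have h6 : 4*(t:ℝ)*R < C := (mul_lt_mul_iff_of_pos_right hapos).mp h5
        rw [le_div_iff₀ (by positivity)]
        linarith
      · have hzero : ∀ s ∈ Finset.Ioc t Δ, a s = 0 := by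
          intro s hs
          simp only [Finset.mem_Ioc] at hs
          rw [Finset.not_nonempty_iff_eq_empty] at hA
          rw [ha]
          have hsub : Finset.univ.filter (fun i => s ≤ f i)
              ⊆ Finset.univ.filter (fun i => t ≤ f i) := by
            intro i hi
            simp only [Finset.mem_filter, Finset.mem_univ, true_and] at *
            omega
          rw [hA] at hsub
          simp [Finset.subset_empty.mp hsub]
        rw [Finset.sum_eq_zero hzero]
        simp only [Nat.cast_zero]
        positivity
    -- final contradiction
    have e1 : (∑ i, (f i)^2 : ℕ)
        = S 1 + 2 * ∑ t ∈ Finset.Ico 1 Δ, (∑ s ∈ Finset.Ioc t Δ, a s) := by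
      rw [cnt1 f hfle]
      rw [show ∑ s ∈ Finset.Icc 1 Δ, (2*s-1) * (Finset.univ.filter (fun i => s ≤ f i)).card
          = ∑ s ∈ Finset.Icc 1 Δ, (2*s-1) * a s from rfl]
      rw [cnt3 Δ a]
      congr 1
      have h1 : S 1 = 1 * a 1 + ∑ s ∈ Finset.Ioc 1 Δ, a s := cnt2 f hfle 1
      have h2 : Finset.Icc 1 Δ = insert 1 (Finset.Ioc 1 Δ) := by
        ext s; simp only [Finset.mem_Icc, Finset.mem_insert, Finset.mem_Ioc]; omega
      rw [h2, Finset.sum_insert (by simp), h1]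
      omega
    have h2 : (∑ t ∈ Finset.Ico 1 Δ, ∑ s ∈ Finset.Ioc t Δ, ((a s : ℕ):ℝ))
        ≤ ∑ t ∈ Finset.Ico 1 Δ, C/(4*(t:ℝ)) := by
      refine Finset.sum_le_sum fun t ht => ?_
      have := hR t ht
      push_cast at this
      exact this
    have h3 : ∑ t ∈ Finset.Ico 1 Δ, C/(4*(t:ℝ)) ≤ C/4 * (2*Real.log Δ) := by
      have he : ∀ t ∈ Finset.Ico 1 Δ, C/(4*(t:ℝ)) = C/4 * (1/(t:ℝ)) := by
        intro t _
        rw [div_mul_div_comm, mul_one]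
      rw [Finset.sum_congr rfl he, ← Finset.mul_sum]
      exact mul_le_mul_of_nonneg_left (harm_le Δ) (by positivity)
    have hfinal : ‖z‖^2 < C * (Real.log Δ + 1) := by
      rw [hN, e1]
      push_cast
      have hS1' := hS1
      linarith
    have hCeq : C * (Real.log Δ + 1) = ‖z‖^2 := by
      rw [hC, div_mul_cancel₀ _ (ne_of_gt hlogpos)]
    rw [hCeq] at hfinal
    exact lt_irrefl _ hfinal
end
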